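/- arXiv:2410.07534 — 6 statements merged into one kernel-verified Lean document; each statement's English description precedes it below -/
import Mathlib

section
/- For every real number u > 0 and every complex number s, the iterated sum ∑_{n=0}^∞ ∑_{k=0}^n (-1)^k * C(n,k) * (k+u+1)^(1-s) converges and equals u^(1-s). -/
set_option maxHeartbeats 1000000

open Finset

lemma abs_tel (f : ℕ → ℂ) (n : ℕ) :
    ∑ k ∈ range (n+2), (-1:ℂ)^k * ((n+1).choose k : ℂ) * f k
      = ∑ k ∈ range (n+1), (-1:ℂ)^k * (n.choose k : ℂ) * f k
        - ∑ k ∈ range (n+1), (-1:ℂ)^k * (n.choose k : ℂ) * f (k+1) := by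
  rw [Finset.sum_range_succ' _ (n+1)]
  simp only [Nat.choose_succ_succ, Nat.cast_add, pow_succ]
  have expand : ∑ x ∈ range (n+1), (-1:ℂ)^x * -1 * ((n.choose x : ℂ) + (n.choose (x+1) : ℂ)) * f (x+1)
      = (∑ x ∈ range (n+1), (-1:ℂ)^(x+1) * (n.choose (x+1) : ℂ) * f (x+1))
        - ∑ x ∈ range (n+1), (-1:ℂ)^x * (n.choose x : ℂ) * f (x+1) := by
    rw [← Finset.sum_sub_distrib]
    exact Finset.sum_congr rfl fun i _ => by rw [pow_succ]; ring
  rw [expand]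
  have h2 : ∑ x ∈ range (n+1), (-1:ℂ)^(x+1) * (n.choose (x+1) : ℂ) * f (x+1)
      = ∑ k ∈ range (n+1), (-1:ℂ)^k * (n.choose k : ℂ) * f k - f 0 := by
    rw [Finset.sum_range_succ, Nat.choose_succ_self]
    rw [Finset.sum_range_succ' (fun k => (-1:ℂ)^k * (n.choose k : ℂ) * f k) n]
    simp
  rw [h2]
  simp
  ring

noncomputable def bb (α : ℂ) (w : ℝ) (n : ℕ) : ℂ :=
  ∑ k ∈ Finset.range (n+1), (-1 : ℂ)^k * (n.choose k : ℂ) * ((k + w : ℝ) : ℂ) ^ α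

lemma bb_tel (α : ℂ) (w : ℝ) (n : ℕ) : bb α (w+1) n = bb α w n - bb α w (n+1) := by
  have h := abs_tel (fun k => ((k + w : ℝ) : ℂ) ^ α) n
  unfold bb
  rw [show n + 1 + 1 = n + 2 from rfl, h]
  have : ∀ k : ℕ, (((k:ℝ) + (w+1) : ℝ) : ℂ) ^ α = (((k+1:ℕ) + w : ℝ) : ℂ) ^ α := by
    intro k; norm_num; ring_nf
  simp only [this]
  ring

lemma bb_rec (α : ℂ) (w : ℝ) (hw : 0 < w) (n : ℕ) :
    bb α w (n+1) = w * bb (α-1) w (n+1) - (n+1) * bb (α-1) (w+1) n := by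
  have hsplit : ∀ k : ℕ, ((k + w : ℝ) : ℂ) ^ α
      = ((k + w : ℝ) : ℂ) ^ (α-1) * ((k:ℂ) + (w:ℂ)) := by
    intro k
    have hne : ((k + w : ℝ) : ℂ) ≠ 0 := by
      simp only [ne_eq, Complex.ofReal_eq_zero]
      positivity
    calc ((k + w : ℝ) : ℂ) ^ α = ((k + w : ℝ) : ℂ) ^ (α - 1 + 1) := by ring_nf
      _ = ((k + w : ℝ) : ℂ) ^ (α-1) * ((k + w : ℝ) : ℂ) := by
          rw [Complex.cpow_add _ _ hne, Complex.cpow_one]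
      _ = _ := by push_cast; ring
  unfold bb
  simp only [hsplit]
  have expand : ∑ k ∈ range (n+2), (-1:ℂ)^k * ((n+1).choose k : ℂ)
        * (((k + w : ℝ) : ℂ) ^ (α-1) * ((k:ℂ) + (w:ℂ)))
      = (w:ℂ) * ∑ k ∈ range (n+2), (-1:ℂ)^k * ((n+1).choose k : ℂ) * ((k + w : ℝ) : ℂ) ^ (α-1)
        + ∑ k ∈ range (n+2), (-1:ℂ)^k * (((n+1).choose k : ℂ) * k) * ((k + w : ℝ) : ℂ) ^ (α-1) := by
    rw [Finset.mul_sum, ← Finset.sum_add_distrib]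
    exact Finset.sum_congr rfl fun k _ => by ring
  rw [show n + 1 + 1 = n + 2 from rfl, expand]
  have hT : ∑ k ∈ range (n+2), (-1:ℂ)^k * (((n+1).choose k : ℂ) * k) * ((k + w : ℝ) : ℂ) ^ (α-1)
      = -((n:ℂ)+1) * ∑ k ∈ range (n+1), (-1:ℂ)^k * (n.choose k : ℂ) * ((k + (w+1) : ℝ) : ℂ) ^ (α-1) := by
    rw [Finset.sum_range_succ' _ (n+1)]
    simp only [Nat.cast_zero, mul_zero, zero_mul, pow_zero, one_mul, add_zero]
    rw [Finset.mul_sum]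
    apply Finset.sum_congr rfl
    intro i _
    have hcn : (n+1) * n.choose i = (n+1).choose (i+1) * (i+1) := by
      simpa [Nat.succ_eq_add_one] using Nat.add_one_mul_choose_eq n i
    have hc : ((n:ℂ)+1) * (n.choose i : ℂ) = ((n+1).choose (i+1) : ℂ) * ((i:ℂ)+1) := by
      exact_mod_cast congrArg (fun m : ℕ => (m : ℂ)) hcn
    push_cast
    rw [show ((i:ℂ) + 1 + (w:ℂ)) = ((i:ℂ) + ((w:ℂ)+1)) by ring]
    set B := ((i:ℂ) + ((w:ℂ)+1)) ^ (α-1) with hB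
    rw [pow_succ]
    linear_combination ((-1:ℂ)^i * B) * hc
  rw [hT]
  ring

open MeasureTheory Set

lemma int_conv {z : ℂ} (hz : 0 < z.re) {c : ℝ} (hc : 0 < c) :
    IntegrableOn (fun t : ℝ => (t:ℂ)^(z-1) * ((Real.exp (-(c*t)) : ℝ) : ℂ)) (Ioi 0) := by
  have h0 := Complex.GammaIntegral_convergent hz
  rw [← mul_zero c, ← integrableOn_Ioi_comp_mul_left_iff _ _ hc] at h0
  refine (IntegrableOn.congr_fun (h0.const_mul (((c:ℂ)^(z-1))⁻¹)) (fun t ht => ?_)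
    measurableSet_Ioi)
  have ht' : (0:ℝ) < t := ht
  have hcc : ((c:ℂ))^(z-1) ≠ 0 := by
    rw [Ne, Complex.cpow_eq_zero_iff, not_and_or]
    exact Or.inl (Complex.ofReal_ne_zero.mpr hc.ne')
  have hmul : ((c*t:ℝ):ℂ)^(z-1) = (c:ℂ)^(z-1) * (t:ℂ)^(z-1) := by
    push_cast
    exact Complex.mul_cpow_ofReal_nonneg hc.le ht'.le _
  rw [hmul]
  field_simp

lemma cpow_mul_Gamma_eq {α : ℂ} (hα : α.re < 0) {c : ℝ} (hc : 0 < c) :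
    ((c:ℝ):ℂ)^α * Complex.Gamma (-α)
      = ∫ t in Ioi (0:ℝ), (t:ℂ)^(-α-1) * ((Real.exp (-(c*t)) : ℝ) : ℂ) := by
  have hre : 0 < (-α).re := by simpa using neg_pos.mpr hα
  have h := Complex.integral_cpow_mul_exp_neg_mul_Ioi hre hc
  have hcongr : ∫ t in Ioi (0:ℝ), (t:ℂ)^(-α-1) * ((Real.exp (-(c*t)) : ℝ) : ℂ)
      = ∫ t in Ioi (0:ℝ), (t:ℂ)^(-α-1) * Complex.exp (-((c:ℂ)*(t:ℂ))) := by
    refine setIntegral_congr_fun measurableSet_Ioi (fun t _ => ?_)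
    congr 1
    push_cast [Complex.ofReal_exp]
    ring_nf
  rw [hcongr, h]
  congr 1
  rw [one_div, Complex.inv_cpow, ← Complex.cpow_neg, neg_neg]
  rw [Complex.arg_ofReal_of_nonneg hc.le]
  exact Real.pi_ne_zero.symm

lemma real_binom (x : ℝ) (n : ℕ) :
    (1-x)^n = ∑ k ∈ range (n+1), (-1:ℝ)^k * (n.choose k : ℝ) * x^k := by
  have h := add_pow (-x) (1:ℝ) n
  calc (1-x)^n = (-x+1)^n := by ring
    _ = ∑ k ∈ range (n+1), (-x)^k * 1^(n-k) * (n.choose k : ℝ) := h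
    _ = _ := Finset.sum_congr rfl fun k _ => by rw [neg_pow]; ring

lemma bb_mul_Gamma {α : ℂ} (hα : α.re < 0) {w : ℝ} (hw : 0 < w) (n : ℕ) :
    bb α w n * Complex.Gamma (-α)
      = ∫ t in Ioi (0:ℝ),
          (t:ℂ)^(-α-1) * ((Real.exp (-(w*t)) * (1-Real.exp (-t))^n : ℝ) : ℂ) := by
  have hre : 0 < (-α).re := by simpa using neg_pos.mpr hα
  unfold bb
  rw [Finset.sum_mul]
  have hterm : ∀ k ∈ range (n+1),
      (-1:ℂ)^k * (n.choose k : ℂ) * ((k + w : ℝ) : ℂ) ^ α * Complex.Gamma (-α)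
        = ∫ t in Ioi (0:ℝ),
            (-1:ℂ)^k * (n.choose k : ℂ) * ((t:ℂ)^(-α-1) * ((Real.exp (-((k+w)*t)) : ℝ) : ℂ)) := by
    intro k _
    rw [MeasureTheory.integral_const_mul]
    have hc : (0:ℝ) < k + w := by positivity
    rw [← cpow_mul_Gamma_eq hα hc]
    ring
  rw [Finset.sum_congr rfl hterm, ← integral_finset_sum]
  · refine setIntegral_congr_fun measurableSet_Ioi (fun t ht => ?_)
    have ht' : (0:ℝ) < t := ht
    have hsum : ∑ k ∈ range (n+1),
        (-1:ℂ)^k * (n.choose k : ℂ) * ((t:ℂ)^(-α-1) * ((Real.exp (-((k+w)*t)) : ℝ) : ℂ))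
        = (t:ℂ)^(-α-1) * ((∑ k ∈ range (n+1),
            (-1:ℝ)^k * (n.choose k : ℝ) * Real.exp (-((k+w)*t)) : ℝ) : ℂ) := by
      push_cast
      rw [Finset.mul_sum]
      exact Finset.sum_congr rfl fun k _ => by ring
    rw [hsum]
    congr 2
    rw [real_binom (Real.exp (-t)) n, Finset.mul_sum]
    refine Finset.sum_congr rfl fun k _ => ?_
    rw [← Real.exp_nat_mul]
    rw [show -((k+w)*t) = -(w*t) + k * (-t) by ring, Real.exp_add]
    ring
  · intro k _
    exact (int_conv hre (by positivity : (0:ℝ) < k + w)).const_mul _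

-- helper: polynomial growth dominated by exponential
lemma poly_le_exp {q : ℝ} (hq : 0 ≤ q) : ∃ K : ℝ, 0 < K ∧ ∀ x : ℝ, 1 ≤ x →
    x ^ q ≤ K * Real.exp x := by
  refine ⟨((Nat.ceil q).factorial : ℝ), by positivity, fun x hx => ?_⟩
  set m := Nat.ceil q with hm
  have h1 : x ^ q ≤ x ^ (m:ℝ) :=
    Real.rpow_le_rpow_of_exponent_le hx (Nat.le_ceil q)
  have h2 : x ^ (m:ℝ) = x ^ m := Real.rpow_natCast x m
  have h3 : x ^ m / m.factorial ≤ Real.exp x := by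
    have hx0 : (0:ℝ) ≤ x := by linarith
    have := Real.sum_le_exp_of_nonneg hx0 (m+1)
    refine le_trans ?_ this
    rw [Finset.sum_range_succ]
    have : 0 ≤ ∑ i ∈ range m, x ^ i / i.factorial := by positivity
    linarith
  have hfac : (0:ℝ) < (m.factorial : ℝ) := by positivity
  rw [div_le_iff₀ hfac] at h3
  calc x ^ q ≤ x ^ (m:ℝ) := h1
    _ = x ^ m := h2
    _ ≤ Real.exp x * m.factorial := h3
    _ = m.factorial * Real.exp x := by ring

lemma poly_le_exp' {q ε : ℝ} (hq : 0 ≤ q) (hε : 0 < ε) : ∃ K : ℝ, 0 < K ∧ ∀ x : ℝ, 1 ≤ x →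
    x ^ q ≤ K * Real.exp (ε * x) := by
  obtain ⟨K, hK, h⟩ := poly_le_exp hq
  refine ⟨ε⁻¹ ^ q * max K 1, by positivity, fun x hx => ?_⟩
  have hx0 : (0:ℝ) < x := by linarith
  have key : x ^ q = ε⁻¹ ^ q * (ε * x) ^ q := by
    rw [← Real.mul_rpow (by positivity) (by positivity)]
    rw [show ε⁻¹ * (ε * x) = x by field_simp]
  rw [key]
  rcases le_or_gt 1 (ε * x) with hc | hc
  · have := h (ε*x) hc
    have h4 : (ε*x)^q ≤ max K 1 * Real.exp (ε*x) :=
      le_trans this (by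
        have : K ≤ max K 1 := le_max_left _ _
        nlinarith [Real.exp_pos (ε*x)])
    calc ε⁻¹ ^ q * (ε * x) ^ q ≤ ε⁻¹ ^ q * (max K 1 * Real.exp (ε*x)) := by
          apply mul_le_mul_of_nonneg_left h4 (by positivity)
      _ = ε⁻¹ ^ q * max K 1 * Real.exp (ε * x) := by ring
  · have h4 : (ε*x)^q ≤ 1 := by
      apply Real.rpow_le_one (by positivity) hc.le hq
    have h5 : (1:ℝ) ≤ Real.exp (ε*x) := by
      apply Real.one_le_exp; positivity
    calc ε⁻¹ ^ q * (ε * x) ^ q ≤ ε⁻¹ ^ q * 1 := by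
          apply mul_le_mul_of_nonneg_left h4 (by positivity)
      _ ≤ ε⁻¹ ^ q * (max K 1 * Real.exp (ε * x)) := by
          apply mul_le_mul_of_nonneg_left ?_ (by positivity)
          nlinarith [le_max_right K 1]
      _ = ε⁻¹ ^ q * max K 1 * Real.exp (ε * x) := by ring

lemma g0_integrable {p w : ℝ} (hp : -1 < p) (hw : 0 < w) :
    IntegrableOn (fun t : ℝ => t ^ p * Real.exp (-(w*t))) (Ioi (0:ℝ)) := by
  have h0 := Real.GammaIntegral_convergent (show 0 < p+1 by linarith)
  rw [← mul_zero w, ← integrableOn_Ioi_comp_mul_left_iff _ _ hw] at h0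
  refine (IntegrableOn.congr_fun (h0.const_mul ((w ^ p)⁻¹)) (fun t ht => ?_) measurableSet_Ioi)
  have ht' : (0:ℝ) < t := ht
  have : (w*t) ^ (p+1-1) = w^p * t^p := by
    rw [show p+1-1 = p by ring, Real.mul_rpow hw.le ht'.le]
  rw [this]
  have hwp : (0:ℝ) < w ^ p := Real.rpow_pos_of_pos hw p
  field_simp

lemma one_sub_exp_mem {t : ℝ} (ht : 0 < t) : 0 ≤ 1 - Real.exp (-t) ∧ 1 - Real.exp (-t) ≤ 1 := by
  constructor
  · have : Real.exp (-t) ≤ 1 := Real.exp_le_one_iff.mpr (by linarith)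
    linarith
  · have := Real.exp_pos (-t); linarith

lemma gn_integrable {p w : ℝ} (hp : -1 < p) (hw : 0 < w) (n : ℕ) :
    IntegrableOn (fun t : ℝ => t ^ p * (Real.exp (-(w*t)) * (1-Real.exp (-t))^n))
      (Ioi (0:ℝ)) := by
  refine Integrable.mono (g0_integrable hp hw) ?_ ?_
  · refine (ContinuousOn.aestronglyMeasurable ?_ measurableSet_Ioi)
    refine ContinuousOn.mul ?_ (Continuous.continuousOn (by continuity))
    exact fun x hx => (Real.continuousAt_rpow_const x p (Or.inl (ne_of_gt hx))).continuousWithinAt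
  · rw [ae_restrict_iff' measurableSet_Ioi]
    filter_upwards with t ht
    have ht' : (0:ℝ) < t := ht
    obtain ⟨h1, h2⟩ := one_sub_exp_mem ht'
    have hb : (0:ℝ) ≤ (1-Real.exp (-t))^n := pow_nonneg h1 n
    have hb2 : (1-Real.exp (-t))^n ≤ 1 := pow_le_one₀ h1 h2
    have htp : (0:ℝ) ≤ t ^ p := Real.rpow_nonneg ht'.le p
    have hexp := Real.exp_pos (-(w*t))
    rw [Real.norm_eq_abs, Real.norm_eq_abs, abs_of_nonneg (by positivity),
      abs_of_nonneg (by positivity)]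
    nlinarith [mul_le_mul_of_nonneg_left (mul_le_of_le_one_right hexp.le hb2) htp]

lemma J_bound {p w δ : ℝ} (hp : -1 < p) (hδ : 0 < δ) (hδw : δ < w) :
    ∃ C : ℝ, ∀ n : ℕ, 1 ≤ n →
      ∫ t in Ioi (0:ℝ), t^p * (Real.exp (-(w*t)) * (1-Real.exp (-t))^n)
        ≤ C * (n:ℝ)^(δ-w) := by
  have hw : 0 < w := hδ.trans hδw
  set η : ℝ := δ/(2*w) with hηdef
  have hη0 : 0 < η := by positivity
  have hη1 : η ≤ 1/2 := by
    rw [hηdef, div_le_iff₀ (by positivity)]; nlinarith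
  set ε : ℝ := δ/4 with hεdef
  have hε : 0 < ε := by positivity
  have hεw : ε < w := by rw [hεdef]; nlinarith
  obtain ⟨K, hK, hKle⟩ := poly_le_exp' (q := max p 0) (le_max_right _ _) hε
  obtain ⟨K2, hK2, hK2le⟩ := poly_le_exp (q := (w-δ)/η) (div_nonneg (by linarith) hη0.le)
  have hg0 := g0_integrable hp hw
  set C1 : ℝ := ∫ t in Ioi (0:ℝ), t^p * Real.exp (-(w*t)) with hC1def
  have hC1 : 0 ≤ C1 :=
    setIntegral_nonneg measurableSet_Ioi fun t ht =>
      mul_nonneg (Real.rpow_nonneg (le_of_lt ht) p) (Real.exp_pos _).le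
  -- bound for all n : J_n ≤ C1
  have hJC1 : ∀ n : ℕ, ∫ t in Ioi (0:ℝ), t^p * (Real.exp (-(w*t)) * (1-Real.exp (-t))^n) ≤ C1 := by
    intro n
    refine setIntegral_mono_on (gn_integrable hp hw n) hg0 measurableSet_Ioi fun t ht => ?_
    have ht' : (0:ℝ) < t := ht
    obtain ⟨h1, h2⟩ := one_sub_exp_mem ht'
    have hb2 : (1-Real.exp (-t))^n ≤ 1 := pow_le_one₀ h1 h2
    have htp : (0:ℝ) ≤ t ^ p := Real.rpow_nonneg ht'.le p
    have hexp := (Real.exp_pos (-(w*t))).le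
    nlinarith [mul_le_mul_of_nonneg_left (mul_le_of_le_one_right hexp hb2) htp]
  refine ⟨max (C1 * (8:ℝ)^(w-δ)) (C1 * K2 + K * (w-ε)⁻¹), fun n hn => ?_⟩
  have hn1 : (1:ℝ) ≤ (n:ℝ) := by exact_mod_cast hn
  have hn0 : (0:ℝ) < (n:ℝ) := by linarith
  have hnd : 0 < (n:ℝ)^(δ-w) := Real.rpow_pos_of_pos hn0 _
  rcases lt_or_ge n 8 with h8 | h8
  · -- small n
    have hle : (n:ℝ)^(δ-w) ≥ (8:ℝ)^(δ-w) := by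
      apply Real.rpow_le_rpow_of_nonpos hn0 (by exact_mod_cast h8.le) (by linarith)
    calc ∫ t in Ioi (0:ℝ), t^p * (Real.exp (-(w*t)) * (1-Real.exp (-t))^n) ≤ C1 := hJC1 n
      _ = (C1 * (8:ℝ)^(w-δ)) * (8:ℝ)^(δ-w) := by
          rw [mul_assoc, ← Real.rpow_add (by norm_num : (0:ℝ) < 8)]
          norm_num
      _ ≤ (C1 * (8:ℝ)^(w-δ)) * (n:ℝ)^(δ-w) := by
          apply mul_le_mul_of_nonneg_left hle (by positivity)
      _ ≤ _ := by
          apply mul_le_mul_of_nonneg_right (le_max_left _ _) hnd.le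
  · -- main case n ≥ 8
    have hlog : (2:ℝ) ≤ Real.log n := by
      have h8' : (8:ℝ) ≤ (n:ℝ) := by exact_mod_cast h8
      have : Real.exp 2 ≤ 8 := by
        have h1 := Real.exp_one_lt_d9
        have : Real.exp 2 = Real.exp 1 * Real.exp 1 := by
          rw [← Real.exp_add]; norm_num
        nlinarith [Real.exp_pos 1]
      calc (2:ℝ) = Real.log (Real.exp 2) := (Real.log_exp 2).symm
        _ ≤ Real.log 8 := Real.log_le_log (Real.exp_pos 2) this
        _ ≤ Real.log n := Real.log_le_log (by norm_num) h8'
    set T : ℝ := (1-η) * Real.log n with hTdef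
    have hT1 : 1 ≤ T := by
      rw [hTdef]; nlinarith
    have hT0 : 0 < T := by linarith
    have expT : Real.exp (-T) = (n:ℝ)^(η-1) := by
      rw [Real.rpow_def_of_pos hn0, hTdef]; congr 1; ring
    have npow : (n:ℝ) * (n:ℝ)^(η-1) = (n:ℝ)^η := by
      nth_rewrite 1 [← Real.rpow_one (n:ℝ)]
      rw [← Real.rpow_add hn0]; norm_num
    have hnη1 : 1 ≤ (n:ℝ)^η := Real.one_le_rpow hn1 hη0.le
    -- split
    have hint1 : IntegrableOn (fun t : ℝ => t^p * (Real.exp (-(w*t)) * (1-Real.exp (-t))^n)) (Ioc 0 T) :=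
      (gn_integrable hp hw n).mono_set Ioc_subset_Ioi_self
    have hint2 : IntegrableOn (fun t : ℝ => t^p * (Real.exp (-(w*t)) * (1-Real.exp (-t))^n)) (Ioi T) :=
      (gn_integrable hp hw n).mono_set (Ioi_subset_Ioi hT0.le)
    have hsplit : ∫ t in Ioi (0:ℝ), t^p * (Real.exp (-(w*t)) * (1-Real.exp (-t))^n)
        = (∫ t in Ioc (0:ℝ) T, t^p * (Real.exp (-(w*t)) * (1-Real.exp (-t))^n))
          + ∫ t in Ioi T, t^p * (Real.exp (-(w*t)) * (1-Real.exp (-t))^n) := by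
      rw [← Ioc_union_Ioi_eq_Ioi hT0.le, setIntegral_union (Ioc_disjoint_Ioi le_rfl)
        measurableSet_Ioi hint1 hint2]
    rw [hsplit]
    -- part 1
    have hpart1 : (∫ t in Ioc (0:ℝ) T, t^p * (Real.exp (-(w*t)) * (1-Real.exp (-t))^n))
        ≤ C1 * K2 * (n:ℝ)^(δ-w) := by
      have step1 : (∫ t in Ioc (0:ℝ) T, t^p * (Real.exp (-(w*t)) * (1-Real.exp (-t))^n))
          ≤ ∫ t in Ioc (0:ℝ) T, Real.exp (-((n:ℝ)^η)) * (t^p * Real.exp (-(w*t))) := by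
        refine setIntegral_mono_on hint1 ((hg0.mono_set Ioc_subset_Ioi_self).const_mul _)
          measurableSet_Ioc fun t ht => ?_
        obtain ⟨ht0, htT⟩ := ht
        obtain ⟨h1, _⟩ := one_sub_exp_mem ht0
        have mono1 : 1 - Real.exp (-t) ≤ 1 - Real.exp (-T) := by
          have := Real.exp_le_exp.mpr (neg_le_neg htT); linarith
        have mono2 : 1 - Real.exp (-T) ≤ Real.exp (-(Real.exp (-T))) := by
          have := Real.add_one_le_exp (-(Real.exp (-T))); linarith
        have hpw : (1 - Real.exp (-t))^n ≤ Real.exp (-(Real.exp (-T)))^n := by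
          calc (1 - Real.exp (-t))^n ≤ (1 - Real.exp (-T))^n := pow_le_pow_left₀ h1 mono1 n
            _ ≤ Real.exp (-(Real.exp (-T)))^n := by
                apply pow_le_pow_left₀ (by linarith [(one_sub_exp_mem hT0).1]) mono2
        have hpw2 : Real.exp (-(Real.exp (-T)))^n = Real.exp (-((n:ℝ)^η)) := by
          rw [← Real.exp_nat_mul, expT]
          congr 1
          rw [← npow]; ring
        have htp : (0:ℝ) ≤ t ^ p := Real.rpow_nonneg ht0.le p
        have hexp := (Real.exp_pos (-(w*t))).le
        rw [hpw2] at hpw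
        calc t^p * (Real.exp (-(w*t)) * (1-Real.exp (-t))^n)
            ≤ t^p * (Real.exp (-(w*t)) * Real.exp (-((n:ℝ)^η))) := by
              apply mul_le_mul_of_nonneg_left (mul_le_mul_of_nonneg_left hpw hexp) htp
          _ = Real.exp (-((n:ℝ)^η)) * (t^p * Real.exp (-(w*t))) := by ring
      have step2 : (∫ t in Ioc (0:ℝ) T, Real.exp (-((n:ℝ)^η)) * (t^p * Real.exp (-(w*t))))
          ≤ Real.exp (-((n:ℝ)^η)) * C1 := by
        rw [MeasureTheory.integral_const_mul]
        apply mul_le_mul_of_nonneg_left _ (Real.exp_pos _).le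
        apply setIntegral_mono_set hg0
        · filter_upwards [ae_restrict_mem measurableSet_Ioi] with t ht
          exact mul_nonneg (Real.rpow_nonneg (le_of_lt ht) p) (Real.exp_pos _).le
        · exact HasSubset.Subset.eventuallyLE Ioc_subset_Ioi_self
      have step3 : Real.exp (-((n:ℝ)^η)) ≤ K2 * (n:ℝ)^(δ-w) := by
        have h := hK2le ((n:ℝ)^η) hnη1
        have heq : ((n:ℝ)^η)^((w-δ)/η) = (n:ℝ)^(w-δ) := by
          rw [← Real.rpow_mul hn0.le]
          congr 1
          field_simp
        rw [heq] at h
        rw [Real.exp_neg, show δ-w = -(w-δ) by ring, Real.rpow_neg hn0.le,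
          inv_eq_one_div, inv_eq_one_div, mul_one_div,
          div_le_div_iff₀ (Real.exp_pos _) (Real.rpow_pos_of_pos hn0 _)]
        nlinarith
      calc (∫ t in Ioc (0:ℝ) T, t^p * (Real.exp (-(w*t)) * (1-Real.exp (-t))^n))
          ≤ Real.exp (-((n:ℝ)^η)) * C1 := step1.trans step2
        _ ≤ (K2 * (n:ℝ)^(δ-w)) * C1 := mul_le_mul_of_nonneg_right step3 hC1
        _ = C1 * K2 * (n:ℝ)^(δ-w) := by ring
    -- part 2
    have hpart2 : (∫ t in Ioi T, t^p * (Real.exp (-(w*t)) * (1-Real.exp (-t))^n))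
        ≤ K * (w-ε)⁻¹ * (n:ℝ)^(δ-w) := by
      have hwε : (0:ℝ) < w - ε := by linarith
      have hintK : IntegrableOn (fun t : ℝ => K * Real.exp (-((w-ε)*t))) (Ioi T) := by
        have h0 := (exp_neg_integrableOn_Ioi T hwε).const_mul K
        refine IntegrableOn.congr_fun h0 (fun t _ => ?_) measurableSet_Ioi
        rw [neg_mul]
      have step1 : (∫ t in Ioi T, t^p * (Real.exp (-(w*t)) * (1-Real.exp (-t))^n))
          ≤ ∫ t in Ioi T, K * Real.exp (-((w-ε)*t)) := by
        refine setIntegral_mono_on hint2 hintK measurableSet_Ioi fun t ht => ?_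
        have ht1 : (1:ℝ) ≤ t := le_trans hT1 (le_of_lt ht)
        have ht0 : (0:ℝ) < t := by linarith
        obtain ⟨h1, h2⟩ := one_sub_exp_mem ht0
        have hb2 : (1-Real.exp (-t))^n ≤ 1 := pow_le_one₀ h1 h2
        have htp : t ^ p ≤ t ^ (max p 0) :=
          Real.rpow_le_rpow_of_exponent_le ht1 (le_max_left _ _)
        have htK : t ^ (max p 0) ≤ K * Real.exp (ε * t) := hKle t ht1
        have hexp := (Real.exp_pos (-(w*t))).le
        have htp0 : (0:ℝ) ≤ t ^ p := Real.rpow_nonneg ht0.le p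
        calc t^p * (Real.exp (-(w*t)) * (1-Real.exp (-t))^n)
            ≤ t^p * Real.exp (-(w*t)) :=
              mul_le_mul_of_nonneg_left (mul_le_of_le_one_right (Real.exp_pos _).le hb2) htp0
          _ ≤ (K * Real.exp (ε * t)) * Real.exp (-(w*t)) :=
              mul_le_mul_of_nonneg_right (htp.trans htK) hexp
          _ = K * Real.exp (-((w-ε)*t)) := by
              rw [mul_assoc, ← Real.exp_add]
              congr 2
              ring
      have step2 : (∫ t in Ioi T, K * Real.exp (-((w-ε)*t)))
          = K * ((w-ε)⁻¹ * Real.exp (-((w-ε)*T))) := by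
        rw [MeasureTheory.integral_const_mul]
        congr 1
        have := integral_comp_mul_left_Ioi (fun u => Real.exp (-u)) T hwε
        simp only [smul_eq_mul] at this
        rw [this, integral_exp_neg_Ioi]
      have step3 : Real.exp (-((w-ε)*T)) ≤ (n:ℝ)^(δ-w) := by
        have heq : Real.exp (-((w-ε)*T)) = (n:ℝ)^(-((1-η)*(w-ε))) := by
          rw [Real.rpow_def_of_pos hn0, hTdef]
          congr 1
          ring
        rw [heq]
        apply Real.rpow_le_rpow_of_exponent_le hn1
        have hηw : η * w = δ/2 := by rw [hηdef]; field_simp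
        nlinarith
      calc (∫ t in Ioi T, t^p * (Real.exp (-(w*t)) * (1-Real.exp (-t))^n))
          ≤ K * ((w-ε)⁻¹ * Real.exp (-((w-ε)*T))) := step1.trans (le_of_eq step2)
        _ ≤ K * ((w-ε)⁻¹ * (n:ℝ)^(δ-w)) := by
            apply mul_le_mul_of_nonneg_left _ hK.le
            apply mul_le_mul_of_nonneg_left step3 (by positivity)
        _ = K * (w-ε)⁻¹ * (n:ℝ)^(δ-w) := by ring
    calc (∫ t in Ioc (0:ℝ) T, t^p * (Real.exp (-(w*t)) * (1-Real.exp (-t))^n))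
          + (∫ t in Ioi T, t^p * (Real.exp (-(w*t)) * (1-Real.exp (-t))^n))
        ≤ C1 * K2 * (n:ℝ)^(δ-w) + K * (w-ε)⁻¹ * (n:ℝ)^(δ-w) := add_le_add hpart1 hpart2
      _ = (C1 * K2 + K * (w-ε)⁻¹) * (n:ℝ)^(δ-w) := by ring
      _ ≤ _ := mul_le_mul_of_nonneg_right (le_max_right _ _) hnd.le

lemma bb_bound_base {α : ℂ} (hα : α.re < 0) {w δ : ℝ} (hδ : 0 < δ) (hδw : δ < w) :
    ∃ C : ℝ, ∀ n : ℕ, 1 ≤ n → ‖bb α w n‖ ≤ C * (n:ℝ)^(δ-w) := by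
  have hw : 0 < w := hδ.trans hδw
  obtain ⟨C, hC⟩ := J_bound (p := -α.re - 1) (by linarith) hδ hδw
  have hΓ : Complex.Gamma (-α) ≠ 0 := by
    apply Complex.Gamma_ne_zero
    intro m hm
    have := congrArg Complex.re hm
    simp at this
    have hm0 : (0:ℝ) ≤ m := Nat.cast_nonneg m
    linarith
  refine ⟨‖(Complex.Gamma (-α))⁻¹‖ * C, fun n hn => ?_⟩
  have hbb : bb α w n = (Complex.Gamma (-α))⁻¹
      * ∫ t in Ioi (0:ℝ),
          (t:ℂ)^(-α-1) * ((Real.exp (-(w*t)) * (1-Real.exp (-t))^n : ℝ) : ℂ) := by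
    rw [← bb_mul_Gamma hα hw n]
    field_simp
  rw [hbb, norm_mul]
  rw [mul_assoc]
  apply mul_le_mul_of_nonneg_left _ (norm_nonneg _)
  calc ‖∫ t in Ioi (0:ℝ), (t:ℂ)^(-α-1) * ((Real.exp (-(w*t)) * (1-Real.exp (-t))^n : ℝ) : ℂ)‖
      ≤ ∫ t in Ioi (0:ℝ), ‖(t:ℂ)^(-α-1) * ((Real.exp (-(w*t)) * (1-Real.exp (-t))^n : ℝ) : ℂ)‖ :=
        norm_integral_le_integral_norm _
    _ = ∫ t in Ioi (0:ℝ), t^(-α.re-1) * (Real.exp (-(w*t)) * (1-Real.exp (-t))^n) := by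
        refine setIntegral_congr_fun measurableSet_Ioi (fun t ht => ?_)
        have ht' : (0:ℝ) < t := ht
        obtain ⟨h1, _⟩ := one_sub_exp_mem ht'
        rw [norm_mul,
          Complex.norm_cpow_eq_rpow_re_of_pos ht', Complex.norm_real, Real.norm_eq_abs,
          abs_of_nonneg (by positivity)]
        norm_num
    _ ≤ C * (n:ℝ)^(δ-w) := hC n hn

lemma bb_decay_aux (m : ℕ) : ∀ (α : ℂ), α.re < m → ∀ (w δ : ℝ), 0 < δ → δ < w →
    ∃ C : ℝ, ∀ n : ℕ, 1 ≤ n → ‖bb α w n‖ ≤ C * (n:ℝ)^(δ-w) := by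
  induction m with
  | zero =>
    intro α hα w δ h1 h2
    exact bb_bound_base (by exact_mod_cast hα) h1 h2
  | succ m ih =>
    intro α hα w δ h1 h2
    rcases lt_or_ge α.re m with h | _h
    · exact ih α h w δ h1 h2
    have hw : 0 < w := h1.trans h2
    have hre : (α-1).re < m := by
      simp only [Complex.sub_re, Complex.one_re]
      push_cast at hα ⊢
      linarith
    obtain ⟨C1, hC1⟩ := ih (α-1) hre w δ h1 h2
    obtain ⟨C2, hC2⟩ := ih (α-1) hre (w+1) δ h1 (by linarith)
    set D1 := max C1 0 with hD1
    set D2 := max C2 0 with hD2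
    have hD1n : 0 ≤ D1 := le_max_right _ _
    have hD2n : 0 ≤ D2 := le_max_right _ _
    have hC1' : ∀ n : ℕ, 1 ≤ n → ‖bb (α-1) w n‖ ≤ D1 * (n:ℝ)^(δ-w) := fun n hn =>
      (hC1 n hn).trans (mul_le_mul_of_nonneg_right (le_max_left _ _)
        (Real.rpow_nonneg (Nat.cast_nonneg n) _))
    have hC2' : ∀ n : ℕ, 1 ≤ n → ‖bb (α-1) (w+1) n‖ ≤ D2 * (n:ℝ)^(δ-(w+1)) := fun n hn =>
      (hC2 n hn).trans (mul_le_mul_of_nonneg_right (le_max_left _ _)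
        (Real.rpow_nonneg (Nat.cast_nonneg n) _))
    refine ⟨max (‖bb α w 1‖) (|w| * D1 + (2:ℝ)^(w+1-δ) * D2 + ‖bb (α-1) (w+1) 0‖), fun n hn => ?_⟩
    match n, hn with
    | 1, _ =>
      have : ((1:ℕ):ℝ)^(δ-w) = 1 := by norm_num
      rw [this, mul_one]
      exact le_max_left _ _
    | (m' + 2), _ =>
      have hrec := bb_rec α w hw (m'+1)
      have hN0 : (0:ℝ) < ((m'+2 : ℕ):ℝ) := by positivity
      have hNM : ((m'+2 : ℕ):ℝ) / 2 ≤ ((m'+1 : ℕ):ℝ) := by push_cast; linarith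
      have hM0 : (0:ℝ) < ((m'+2 : ℕ):ℝ)/2 := by positivity
      have e1 : ‖bb α w (m'+2)‖
          ≤ |w| * ‖bb (α-1) w (m'+2)‖ + ((m'+2:ℕ):ℝ) * ‖bb (α-1) (w+1) (m'+1)‖ := by
        rw [show m'+2 = m'+1+1 from rfl, hrec]
        refine (norm_sub_le _ _).trans ?_
        rw [norm_mul, norm_mul]
        apply add_le_add
        · apply mul_le_mul_of_nonneg_right _ (norm_nonneg _)
          rw [Complex.norm_real, Real.norm_eq_abs]
        · apply mul_le_mul_of_nonneg_right _ (norm_nonneg _)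
          have : ((m'+1 : ℕ):ℂ) + 1 = ((m'+2 : ℕ):ℝ) := by push_cast; ring
          rw [show (((m'+1 : ℕ):ℂ) + 1) = (((m'+2 : ℕ):ℝ):ℂ) from this, Complex.norm_real,
            Real.norm_eq_abs, abs_of_nonneg hN0.le]
      have e2 : ((m'+2:ℕ):ℝ) * ‖bb (α-1) (w+1) (m'+1)‖
          ≤ (2:ℝ)^(w+1-δ) * D2 * ((m'+2:ℕ):ℝ)^(δ-w) := by
        have h1 := hC2' (m'+1) (by omega)
        have h2 : (((m'+1):ℕ):ℝ)^(δ-(w+1)) ≤ (((m'+2):ℕ):ℝ)^(δ-(w+1)) * (2:ℝ)^(w+1-δ) := by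
          calc (((m'+1):ℕ):ℝ)^(δ-(w+1)) ≤ (((m'+2:ℕ):ℝ)/2)^(δ-(w+1)) :=
              Real.rpow_le_rpow_of_nonpos hM0 hNM (by linarith)
            _ = (((m'+2):ℕ):ℝ)^(δ-(w+1)) * (2:ℝ)^(w+1-δ) := by
              rw [Real.div_rpow hN0.le (by norm_num), div_eq_mul_inv,
                ← Real.rpow_neg (by norm_num : (0:ℝ) ≤ 2)]
              congr 2
              ring
        calc ((m'+2:ℕ):ℝ) * ‖bb (α-1) (w+1) (m'+1)‖
            ≤ ((m'+2:ℕ):ℝ) * (D2 * ((((m'+1):ℕ):ℝ))^(δ-(w+1))) :=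
              mul_le_mul_of_nonneg_left h1 hN0.le
          _ ≤ ((m'+2:ℕ):ℝ) * (D2 * ((((m'+2):ℕ):ℝ)^(δ-(w+1)) * (2:ℝ)^(w+1-δ))) := by
              apply mul_le_mul_of_nonneg_left _ hN0.le
              exact mul_le_mul_of_nonneg_left h2 hD2n
          _ = (2:ℝ)^(w+1-δ) * D2 * (((m'+2):ℕ):ℝ)^(1 + (δ-(w+1))) := by
              rw [Real.rpow_add hN0, Real.rpow_one]
              ring
          _ = (2:ℝ)^(w+1-δ) * D2 * ((m'+2:ℕ):ℝ)^(δ-w) := by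
              congr 1
              ring_nf
      have e3 : |w| * ‖bb (α-1) w (m'+2)‖ ≤ |w| * D1 * ((m'+2:ℕ):ℝ)^(δ-w) := by
        rw [mul_assoc]
        apply mul_le_mul_of_nonneg_left (hC1' (m'+2) (by omega)) (abs_nonneg w)
      calc ‖bb α w (m'+2)‖
          ≤ |w| * D1 * ((m'+2:ℕ):ℝ)^(δ-w) + (2:ℝ)^(w+1-δ) * D2 * ((m'+2:ℕ):ℝ)^(δ-w) :=
            e1.trans (add_le_add e3 e2)
        _ = (|w| * D1 + (2:ℝ)^(w+1-δ) * D2) * ((m'+2:ℕ):ℝ)^(δ-w) := by ring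
        _ ≤ (|w| * D1 + (2:ℝ)^(w+1-δ) * D2 + ‖bb (α-1) (w+1) 0‖) * ((m'+2:ℕ):ℝ)^(δ-w) := by
            apply mul_le_mul_of_nonneg_right _ (Real.rpow_nonneg hN0.le _)
            linarith [norm_nonneg (bb (α-1) (w+1) 0)]
        _ ≤ _ := mul_le_mul_of_nonneg_right (le_max_right _ _) (Real.rpow_nonneg hN0.le _)

lemma bb_decay (α : ℂ) {w δ : ℝ} (h1 : 0 < δ) (h2 : δ < w) :
    ∃ C : ℝ, ∀ n : ℕ, 1 ≤ n → ‖bb α w n‖ ≤ C * (n:ℝ)^(δ-w) := by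
  refine bb_decay_aux (Nat.ceil α.re + 1) α ?_ w δ h1 h2
  push_cast
  have := Nat.le_ceil α.re
  linarith

lemma bb_zero (α : ℂ) (u : ℝ) : bb α u 0 = ((u:ℝ):ℂ)^α := by
  unfold bb
  simp

theorem stmt_0 (u : ℝ) (hu : 0 < u) (s : ℂ) :
    HasSum (fun n : ℕ => ∑ k ∈ Finset.range (n + 1),
      (-1 : ℂ) ^ k * (n.choose k : ℂ) * ((k + u + 1 : ℝ) : ℂ) ^ (1 - s))
      (((u : ℝ) : ℂ) ^ (1 - s)) := by
  have hfn : (fun n : ℕ => ∑ k ∈ Finset.range (n + 1),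
      (-1 : ℂ) ^ k * (n.choose k : ℂ) * ((k + u + 1 : ℝ) : ℂ) ^ (1 - s))
      = fun n => bb (1-s) (u+1) n := by
    funext n
    unfold bb
    refine Finset.sum_congr rfl fun k _ => ?_
    congr 2
    norm_num [add_assoc]
  rw [hfn]
  set δ : ℝ := min u 1 / 2 with hδdef
  have hδ0 : 0 < δ := by
    rw [hδdef]; have := lt_min hu one_pos; positivity
  have hδu : δ < u := by
    rw [hδdef]
    rcases le_total u 1 with h | h
    · rw [min_eq_left h]; linarith
    · rw [min_eq_right h]; linarith
  have hδu1 : δ < u + 1 := by linarith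
  obtain ⟨C, hC⟩ := bb_decay (1-s) hδ0 hδu1
  have hlt : δ - (u+1) < -1 := by linarith
  have hsum : Summable (fun n => bb (1-s) (u+1) n) := by
    rw [← summable_nat_add_iff 1]
    apply Summable.of_norm
    have hbase : Summable (fun n : ℕ => C * (((n+1):ℕ):ℝ)^(δ-(u+1))) := by
      apply Summable.mul_left
      exact (summable_nat_add_iff (f := fun n : ℕ => ((n:ℝ))^(δ-(u+1))) 1).mpr
        (Real.summable_nat_rpow.mpr hlt)
    exact Summable.of_nonneg_of_le (fun _ => norm_nonneg _)
      (fun n => hC (n+1) (by omega)) hbase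
  have hhs := hsum.hasSum
  have htends := hhs.tendsto_sum_nat
  have hpartial : ∀ N : ℕ, ∑ n ∈ Finset.range N, bb (1-s) (u+1) n
      = bb (1-s) u 0 - bb (1-s) u N := by
    intro N
    rw [Finset.sum_congr rfl (fun n _ => bb_tel (1-s) u n)]
    exact Finset.sum_range_sub' (fun n => bb (1-s) u n) N
  have hzero : Filter.Tendsto (fun N : ℕ => bb (1-s) u N) Filter.atTop (nhds 0) := by
    obtain ⟨C0, hC0⟩ := bb_decay (1-s) (w := u) (δ := u/2) (half_pos hu) (by linarith)
    have hlim : Filter.Tendsto (fun N : ℕ => C0 * (N:ℝ)^(u/2-u)) Filter.atTop (nhds 0) := by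
      rw [show (0:ℝ) = C0 * 0 by ring]
      apply Filter.Tendsto.const_mul
      have : u/2 - u = -(u/2) := by ring
      rw [this]
      exact (tendsto_rpow_neg_atTop (half_pos hu)).comp tendsto_natCast_atTop_atTop
    apply squeeze_zero_norm' _ hlim
    filter_upwards [Filter.eventually_ge_atTop 1] with N hN
    exact hC0 N hN
  have htends2 : Filter.Tendsto (fun N : ℕ => ∑ n ∈ Finset.range N, bb (1-s) (u+1) n)
      Filter.atTop (nhds (bb (1-s) u 0 - 0)) := by
    simp only [hpartial]
    exact Filter.Tendsto.const_sub _ hzero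
  have heq : ∑' n, bb (1-s) (u+1) n = bb (1-s) u 0 - 0 :=
    tendsto_nhds_unique htends htends2
  rw [sub_zero, bb_zero] at heq
  rwa [heq] at hhs
end

section
/- For every real u > 0 and every complex s with Re(s) > 1, the double sum ∑_{n=0}^∞ (1/(n+1)) ∑_{k=0}^n (-1)^k * C(n,k) * (k+u)^(1-s) converges and equals (s-1) * ζ(s,u), where ζ(s,u) is the Hurwitz zeta function. -/
open Complex Set MeasureTheory Real Filter Finset

/-- The Hurwitz zeta function `ζ(s,u) = ∑_{m≥0} (m+u)^{-s}` (for `Re s > 1`, `u > 0`). -/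
noncomputable def hurwitzZetaSum (s : ℂ) (u : ℝ) : ℂ :=
  ∑' m : ℕ, ((m + u : ℝ) : ℂ) ^ (-s)

lemma aux_integrable {z : ℂ} (hz : 0 < z.re) {c : ℝ} (hc : 0 < c) :
    IntegrableOn (fun t : ℝ => (t : ℂ) ^ (z - 1) * (rexp (-(c * t)) : ℂ)) (Ioi 0) := by
  have := Complex.GammaIntegral_convergent hz
  rw [← mul_zero c, ← integrableOn_Ioi_comp_mul_left_iff _ _ hc] at this
  refine (IntegrableOn.congr_fun (this.const_mul (1 / (c : ℂ) ^ (z - 1)))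
    (fun t (ht : 0 < t) => ?_) measurableSet_Ioi)
  simp only [ofReal_mul]
  rw [mul_cpow_ofReal_nonneg hc.le ht.le, one_div]
  have hcz : ((c:ℂ)) ^ (z - 1) ≠ 0 := by
    rw [Ne, cpow_eq_zero_iff, not_and_or]
    exact Or.inl (ofReal_ne_zero.mpr hc.ne')
  field_simp

lemma aux_integral {z : ℂ} (hz : 0 < z.re) {c : ℝ} (hc : 0 < c) :
    ∫ t in Ioi (0:ℝ), (t : ℂ) ^ (z - 1) * (rexp (-(c * t)) : ℂ) =
      Complex.Gamma z * ((c : ℝ) : ℂ) ^ (-z) := by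
  have := integral_cpow_mul_exp_neg_mul_Ioi hz hc
  have heq : ∀ t : ℝ, (t:ℂ) ^ (z-1) * Complex.exp (-(c * t) : ℂ) =
      (t:ℂ) ^ (z - 1) * (rexp (-(c * t)) : ℂ) := by
    intro t; rw [ofReal_exp]; norm_cast
  rw [← integral_congr_ae (Eventually.of_forall heq), this, one_div, inv_cpow, ← cpow_neg,
    mul_comm]
  rw [arg_ofReal_of_nonneg hc.le]
  exact Real.pi_ne_zero.symm

-- real integrability of t^(a-1) * exp(-(u t))
lemma aux_integrable_real {a : ℝ} (ha : 0 < a) {u : ℝ} (hu : 0 < u) :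
    IntegrableOn (fun t : ℝ => t ^ (a - 1) * rexp (-(u * t))) (Ioi 0) := by
  have h : IntegrableOn (fun t : ℝ => ‖(t : ℂ) ^ ((a:ℂ) - 1) * (rexp (-(u * t)) : ℂ)‖) (Ioi 0) :=
    (aux_integrable (z := (a:ℂ)) (by simpa using ha) hu).norm
  refine IntegrableOn.congr_fun h (fun t (ht : 0 < t) => ?_) measurableSet_Ioi
  rw [norm_mul, norm_cpow_eq_rpow_re_of_pos ht]
  simp [abs_of_pos (exp_pos _), Complex.norm_exp]

section StepB

variable (u : ℝ) (s : ℂ)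

/-- coefficient -/
noncomputable def cc (n k : ℕ) : ℂ := (-1 : ℂ) ^ k * (n.choose k : ℂ) / ((n : ℂ) + 1)

/-- integrand -/
noncomputable def FF (n : ℕ) (t : ℝ) : ℂ :=
  ∑ k ∈ range (n + 1), cc n k * ((t : ℂ) ^ (s - 1 - 1) * (rexp (-((k + u) * t)) : ℂ))

lemma FF_eq (n : ℕ) {t : ℝ} (ht : 0 < t) :
    FF u s n t = (t : ℂ) ^ (s - 1 - 1) *
      (((1 - rexp (-t)) ^ n / (n + 1) * rexp (-(u * t)) : ℝ) : ℂ) := by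
  have hb : ((1 : ℂ) - Complex.exp (-(t:ℂ))) ^ n =
      ∑ k ∈ range (n + 1), (-1 : ℂ) ^ k * (n.choose k : ℂ) * (Complex.exp (-(t:ℂ))) ^ k := by
    have := add_pow (-(Complex.exp (-(t:ℂ)))) 1 n
    rw [neg_add_eq_sub] at this
    rw [this]
    refine Finset.sum_congr rfl fun k _ => ?_
    rw [neg_pow]
    ring
  have hexp : ∀ k : ℕ, (rexp (-((k + u) * t)) : ℝ) = rexp (-t) ^ k * rexp (-(u * t)) := by
    intro k
    rw [← Real.exp_nat_mul, ← Real.exp_add]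
    ring_nf
  simp only [FF, cc, hexp]
  push_cast
  rw [hb]
  simp only [Finset.sum_div, Finset.sum_mul, Finset.mul_sum]
  refine Finset.sum_congr rfl fun k _ => ?_
  have : ((n : ℂ) + 1) ≠ 0 := Nat.cast_add_one_ne_zero n
  field_simp

lemma FF_norm (n : ℕ) {t : ℝ} (ht : 0 < t) :
    ‖FF u s n t‖ = t ^ (s.re - 2) * ((1 - rexp (-t)) ^ n / (n + 1) * rexp (-(u * t))) := by
  have h1 : rexp (-t) < 1 := by rw [exp_lt_one_iff]; exact neg_neg_of_pos ht
  have h1' : rexp (-t) ≤ 1 := h1.le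
  have h2 : |(1 - rexp (-t)) ^ n / ((n:ℝ) + 1) * rexp (-(u * t))|
      = (1 - rexp (-t)) ^ n / ((n:ℝ) + 1) * rexp (-(u * t)) :=
    abs_of_nonneg (mul_nonneg (div_nonneg (pow_nonneg (by linarith) n) (by positivity))
      (exp_nonneg _))
  rw [FF_eq u s n ht, norm_mul, norm_cpow_eq_rpow_re_of_pos ht,
    Complex.norm_real, Real.norm_eq_abs, h2]
  have : (s - 1 - 1).re = s.re - 2 := by simp [Complex.sub_re]; ring
  rw [this]

lemma FF_integrable (hu : 0 < u) (hs : 1 < s.re) (n : ℕ) : Integrable (FF u s n) (volume.restrict (Ioi 0)) := by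
  refine integrable_finset_sum _ fun k _ => ?_
  exact ((aux_integrable (by simp; linarith) (by positivity)).const_mul _)

lemma FF_integral (hu : 0 < u) (hs : 1 < s.re) (n : ℕ) :
    ∫ t in Ioi (0:ℝ), FF u s n t = Complex.Gamma (s - 1) *
      ((1 / ((n : ℂ) + 1)) * ∑ k ∈ range (n + 1),
        (-1 : ℂ) ^ k * (n.choose k : ℂ) * ((k + u : ℝ) : ℂ) ^ (1 - s)) := by
  simp only [FF]
  rw [integral_finset_sum]
  · rw [Finset.mul_sum, Finset.mul_sum]
    refine Finset.sum_congr rfl fun k _ => ?_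
    rw [integral_const_mul, aux_integral (by simp; linarith) (by positivity)]
    rw [neg_sub]
    simp only [cc]
    push_cast
    have : ((n : ℂ) + 1) ≠ 0 := Nat.cast_add_one_ne_zero n
    field_simp
  · intro k _
    exact ((aux_integrable (by simp; linarith) (by positivity)).const_mul _)

end StepB

section StepB2

variable {u : ℝ} {s : ℂ}

lemma real_hasSum {t : ℝ} (ht : 0 < t) :
    HasSum (fun n : ℕ => (1 - rexp (-t)) ^ n / (n + 1) * rexp (-(u * t)))
      (t / (1 - rexp (-t)) * rexp (-(u * t))) := by
  set x := 1 - rexp (-t) with hx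
  have h1 : rexp (-t) < 1 := by rw [exp_lt_one_iff]; exact neg_neg_of_pos ht
  have hx0 : 0 < x := by simp [hx]; linarith
  have hx1 : x < 1 := by simp [hx]; positivity
  have h := hasSum_pow_div_log_of_abs_lt_one (x := x) (by rw [abs_of_pos hx0]; exact hx1)
  have hlog : -Real.log (1 - x) = t := by
    rw [hx]; simp [Real.log_exp]
  rw [hlog] at h
  have h2 := (h.mul_right x⁻¹).mul_right (rexp (-(u * t)))
  have hfun : ∀ n : ℕ, x ^ (n + 1) / (n + 1) * x⁻¹ * rexp (-(u * t))
      = x ^ n / (n + 1) * rexp (-(u * t)) := by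
    intro n; rw [pow_succ]; field_simp
  rw [funext hfun] at h2
  rw [div_eq_mul_inv]
  exact h2

end StepB2

lemma bound_lemma {t : ℝ} (ht : 0 < t) : t / (1 - rexp (-t)) ≤ 1 + t := by
  have h1 : rexp (-t) < 1 := by rw [exp_lt_one_iff]; exact neg_neg_of_pos ht
  rw [div_le_iff₀ (by linarith)]
  have h2 : t + 1 ≤ rexp t := Real.add_one_le_exp t
  have h3 : rexp (-t) * rexp t = 1 := by rw [← Real.exp_add]; simp
  nlinarith [exp_pos (-t), exp_pos t]

lemma summable_norm_integrals (hu : 0 < u) (hs : 1 < s.re) :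
    Summable (fun n : ℕ => ∫ t in Ioi (0:ℝ), ‖FF u s n t‖) := by
  set g : ℝ → ℝ := fun t => t ^ (s.re - 2) * rexp (-(u * t)) + t ^ (s.re - 1) * rexp (-(u * t))
    with hg
  have i1 : IntegrableOn (fun t : ℝ => t ^ (s.re - 2) * rexp (-(u * t))) (Ioi 0) := by
    have h := aux_integrable_real (a := s.re - 1) (by linarith) hu
    refine IntegrableOn.congr_fun h (fun t _ => ?_) measurableSet_Ioi
    have : s.re - 1 - 1 = s.re - 2 := by ring
    rw [this]
  have i2 : IntegrableOn (fun t : ℝ => t ^ (s.re - 1) * rexp (-(u * t))) (Ioi 0) := by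
    have h := aux_integrable_real (a := s.re) (by linarith) hu
    refine IntegrableOn.congr_fun h (fun t _ => ?_) measurableSet_Ioi
    norm_num
  have hg_int : IntegrableOn g (Ioi 0) := i1.add i2
  refine summable_of_sum_range_le (c := ∫ t in Ioi (0:ℝ), g t)
    (fun n => integral_nonneg fun t => norm_nonneg _) (fun N => ?_)
  rw [← integral_finset_sum _ (fun n _ => (FF_integrable u s hu hs n).norm)]
  refine setIntegral_mono_on (integrable_finset_sum _ fun n _ => (FF_integrable u s hu hs n).norm)
    hg_int measurableSet_Ioi (fun t ht => ?_)
  rw [Set.mem_Ioi] at ht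
  have h1 : rexp (-t) < 1 := by rw [exp_lt_one_iff]; exact neg_neg_of_pos ht
  calc ∑ n ∈ range N, ‖FF u s n t‖
      = t ^ (s.re - 2) * ∑ n ∈ range N, (1 - rexp (-t)) ^ n / (n + 1) * rexp (-(u * t)) := by
        rw [Finset.mul_sum]; exact Finset.sum_congr rfl fun n _ => FF_norm u s n ht
    _ ≤ t ^ (s.re - 2) * (t / (1 - rexp (-t)) * rexp (-(u * t))) := by
        refine mul_le_mul_of_nonneg_left ?_ (by positivity)
        exact sum_le_hasSum _ (fun n _ => mul_nonneg (div_nonneg (pow_nonneg (by linarith) n)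
          (by positivity)) (exp_nonneg _)) (real_hasSum ht)
    _ ≤ t ^ (s.re - 2) * ((1 + t) * rexp (-(u * t))) := by
        refine mul_le_mul_of_nonneg_left ?_ (by positivity)
        exact mul_le_mul_of_nonneg_right (bound_lemma ht) (exp_nonneg _)
    _ = g t := by
        have h3 : t ^ (s.re - 2) * t = t ^ (s.re - 1) := by
          rw [← Real.rpow_add_one ht.ne' (s.re - 2)]
          congr 1
          ring
        have h4 : t ^ (s.re - 2) * ((1 + t) * rexp (-(u * t)))
            = t ^ (s.re - 2) * rexp (-(u * t)) + t ^ (s.re - 2) * t * rexp (-(u * t)) := by ring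
        rw [hg, h4, h3]

lemma tsum_FF (hu : 0 < u) {t : ℝ} (ht : 0 < t) :
    ∑' n : ℕ, FF u s n t =
      (t : ℂ) ^ (s - 1) * ((rexp (-(u * t)) / (1 - rexp (-t)) : ℝ) : ℂ) := by
  have h1 : rexp (-t) < 1 := by rw [exp_lt_one_iff]; exact neg_neg_of_pos ht
  have h := (Complex.hasSum_ofReal.mpr (real_hasSum (u := u) ht)).mul_left ((t : ℂ) ^ (s - 1 - 1))
  have heq : ∀ n : ℕ, (t : ℂ) ^ (s - 1 - 1) *
      (((1 - rexp (-t)) ^ n / (n + 1) * rexp (-(u * t)) : ℝ) : ℂ) = FF u s n t :=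
    fun n => (FF_eq u s n ht).symm
  rw [funext heq] at h
  rw [h.tsum_eq]
  have hc : (t : ℂ) ^ (s - 1) = (t : ℂ) ^ (s - 1 - 1) * (t : ℂ) := by
    have h2 := cpow_add (x := (t : ℂ)) (s - 1 - 1) 1 (ofReal_ne_zero.mpr ht.ne')
    have h3 : s - 1 - 1 + 1 = s - 1 := by ring
    rw [h3, cpow_one] at h2
    exact h2
  rw [hc, mul_assoc]
  congr 1
  rw [← ofReal_mul]
  congr 1
  field_simp

lemma stepA (hu : 0 < u) (hs : 1 < s.re) :
    HasSum (fun m : ℕ => Complex.Gamma s * 1 / ((m + u : ℝ) : ℂ) ^ s)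
      (mellin (fun t : ℝ => ((rexp (-(u * t)) / (1 - rexp (-t)) : ℝ) : ℂ)) s) := by
  refine hasSum_mellin (fun i => Or.inr (by positivity)) (by linarith) (fun t ht => ?_) ?_
  · have h1 : rexp (-t) < 1 := by
      rw [exp_lt_one_iff]; exact neg_neg_of_pos ht
    have := (hasSum_geometric_of_lt_one (exp_nonneg _) h1).mul_left (rexp (-(u * t)))
    have h2 : ∀ m : ℕ, rexp (-(u * t)) * rexp (-t) ^ m = rexp (-(m + u) * t) := by
      intro m
      rw [← Real.exp_nat_mul, ← Real.exp_add]
      ring_nf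
    rw [funext h2] at this
    simpa [div_eq_mul_inv] using Complex.hasSum_ofReal.mpr this
  · simp only [norm_one]
    have := (Real.summable_one_div_nat_add_rpow u s.re).mpr hs
    refine this.congr fun m => ?_
    rw [abs_of_pos (by positivity)]

theorem stmt_1 (u : ℝ) (hu : 0 < u) (s : ℂ) (hs : 1 < s.re) :
    HasSum (fun n : ℕ => (1 / ((n : ℂ) + 1)) * ∑ k ∈ Finset.range (n + 1),
      (-1 : ℂ) ^ k * (n.choose k : ℂ) * ((k + u : ℝ) : ℂ) ^ (1 - s))
      ((s - 1) * hurwitzZetaSum s u) := by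
  set M := mellin (fun t : ℝ => ((rexp (-(u * t)) / (1 - rexp (-t)) : ℝ) : ℂ)) s with hM
  have hGs : Complex.Gamma s ≠ 0 := Complex.Gamma_ne_zero_of_re_pos (by linarith)
  have hG1 : Complex.Gamma (s - 1) ≠ 0 := by
    refine Complex.Gamma_ne_zero_of_re_pos ?_
    simp only [Complex.sub_re, Complex.one_re]
    linarith
  have hs1 : s - 1 ≠ 0 := by
    intro h
    have : (s - 1).re = 0 := by rw [h]; simp
    simp only [Complex.sub_re, Complex.one_re] at this
    linarith
  -- value of M
  have hA := stepA (u := u) (s := s) hu hs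
  have hA' : HasSum (fun m : ℕ => ((m + u : ℝ) : ℂ) ^ (-s)) ((Complex.Gamma s)⁻¹ * M) := by
    have h := hA.mul_left (Complex.Gamma s)⁻¹
    have heq : ∀ m : ℕ, (Complex.Gamma s)⁻¹ * (Complex.Gamma s * 1 / ((m + u : ℝ) : ℂ) ^ s)
        = ((m + u : ℝ) : ℂ) ^ (-s) := by
      intro m
      rw [cpow_neg]
      field_simp
    rw [funext heq] at h
    exact h
  have hζ : hurwitzZetaSum s u = (Complex.Gamma s)⁻¹ * M := by
    rw [hurwitzZetaSum]
    exact hA'.tsum_eq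
  have hMval : M = Complex.Gamma s * hurwitzZetaSum s u := by
    rw [hζ, ← mul_assoc, mul_inv_cancel₀ hGs, one_mul]
  -- step B
  have hB := hasSum_integral_of_summable_integral_norm (μ := volume.restrict (Ioi 0))
    (F := FF u s) (fun n => FF_integrable u s hu hs n) (summable_norm_integrals hu hs)
  have hint : (∫ t in Ioi (0:ℝ), ∑' n : ℕ, FF u s n t) = M := by
    rw [hM, mellin]
    refine setIntegral_congr_fun measurableSet_Ioi (fun t ht => ?_)
    rw [tsum_FF hu ht, smul_eq_mul]
  have hfun : (fun n : ℕ => ∫ t in Ioi (0:ℝ), FF u s n t) =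
      (fun n : ℕ => Complex.Gamma (s - 1) * ((1 / ((n : ℂ) + 1)) * ∑ k ∈ Finset.range (n + 1),
        (-1 : ℂ) ^ k * (n.choose k : ℂ) * ((k + u : ℝ) : ℂ) ^ (1 - s))) :=
    funext fun n => FF_integral u s hu hs n
  rw [hfun, hint] at hB
  have hB' := hB.mul_left (Complex.Gamma (s - 1))⁻¹
  have heq2 : ∀ n : ℕ, (Complex.Gamma (s - 1))⁻¹ * (Complex.Gamma (s - 1) *
      ((1 / ((n : ℂ) + 1)) * ∑ k ∈ Finset.range (n + 1),
        (-1 : ℂ) ^ k * (n.choose k : ℂ) * ((k + u : ℝ) : ℂ) ^ (1 - s)))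
      = (1 / ((n : ℂ) + 1)) * ∑ k ∈ Finset.range (n + 1),
        (-1 : ℂ) ^ k * (n.choose k : ℂ) * ((k + u : ℝ) : ℂ) ^ (1 - s) := by
    intro n
    rw [← mul_assoc, inv_mul_cancel₀ hG1, one_mul]
  rw [funext heq2] at hB'
  have hGam : Complex.Gamma s = (s - 1) * Complex.Gamma (s - 1) := by
    have := Complex.Gamma_add_one (s - 1) hs1
    rwa [sub_add_cancel] at this
  have hval : (Complex.Gamma (s - 1))⁻¹ * M = (s - 1) * hurwitzZetaSum s u := by
    rw [hMval, hGam]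
    field_simp
  rwa [hval] at hB'
end

section
/- Define S_α(s,u) = ∑_{n=0}^∞ (1/(n+α+1)) ∑_{k=0}^n (-1)^k C(n,k) (k+u)^(1-s) for real u > 0, complex s with Re(s) > 2, and real α > 0. Then α * S_α(s,u) = S_{α-1}(s-1,u) + (α-u) * S_{α-1}(s,u). -/
open MeasureTheory Set Finset Filter

/-- `S_α(s,u) = ∑_{n≥0} 1/(n+α+1) ∑_{k=0}^n (-1)^k C(n,k) (k+u)^{1-s}`. -/
noncomputable def Salpha (α : ℝ) (s : ℂ) (u : ℝ) : ℂ :=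
  ∑' n : ℕ, (1 / ((n : ℂ) + (α : ℂ) + 1)) * ∑ k ∈ Finset.range (n + 1),
    (-1 : ℂ) ^ k * (n.choose k : ℂ) * ((k + u : ℝ) : ℂ) ^ (1 - s)



lemma int_exp {p b : ℝ} (hp : -1 < p) (hb : 0 < b) :
    IntegrableOn (fun t : ℝ => t ^ p * Real.exp (-b * t)) (Ioi 0) := by
  have h := integrableOn_rpow_mul_exp_neg_mul_rpow hp zero_lt_one hb
  refine h.congr_fun (fun x hx => ?_) measurableSet_Ioi
  beta_reduce
  rw [Real.rpow_one]

lemma contC {z : ℂ} (hz : 0 < z.re) :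
    ContinuousOn (fun t : ℝ => (t : ℂ) ^ z) (Ioi 0) := fun x hx =>
  (Complex.continuousAt_ofReal_cpow_const x z (Or.inr (ne_of_gt hx))).continuousWithinAt

lemma intC {z : ℂ} (hz : 0 < z.re) {r : ℝ} (hr : 0 < r) :
    IntegrableOn (fun t : ℝ => (t : ℂ) ^ (z - 1) * Complex.exp (-(r * t))) (Ioi 0) := by
  have hmeas : AEStronglyMeasurable (fun t : ℝ => (t : ℂ) ^ (z - 1) * Complex.exp (-(r * t)))
      (volume.restrict (Ioi 0)) := by
    refine ContinuousOn.aestronglyMeasurable ?_ measurableSet_Ioi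
    refine ContinuousOn.mul ?_ (Continuous.continuousOn (by continuity))
    exact fun x hx =>
      (Complex.continuousAt_ofReal_cpow_const x (z - 1) (Or.inr (ne_of_gt hx))).continuousWithinAt
  refine Integrable.mono' (int_exp (p := z.re - 1) (by linarith) hr) hmeas ?_
  filter_upwards [ae_restrict_mem measurableSet_Ioi] with t ht
  rw [Set.mem_Ioi] at ht
  rw [norm_mul, Complex.norm_cpow_eq_rpow_re_of_pos ht, Complex.norm_exp]
  simp [Complex.sub_re, mul_comm]


noncomputable def Abin (u : ℝ) (z : ℂ) (n : ℕ) : ℂ :=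
  ∑ k ∈ Finset.range (n + 1),
    (-1 : ℂ) ^ k * (n.choose k : ℂ) * ((k + u : ℝ) : ℂ) ^ (1 - z)


-- Mellin: Γ(z-1) * (r)^{1-z} = ∫ t^{z-2} e^{-rt}
lemma mellin_term {z : ℂ} (hz : 1 < z.re) {r : ℝ} (hr : 0 < r) :
    Complex.Gamma (z - 1) * ((r : ℂ)) ^ (1 - z)
      = ∫ t in Ioi (0:ℝ), (t : ℂ) ^ (z - 2) * Complex.exp (-(r * t)) := by
  have h := Complex.integral_cpow_mul_exp_neg_mul_Ioi (a := z - 1)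
    (by simp [Complex.sub_re]; linarith) hr
  have h2 : z - 1 - 1 = z - 2 := by ring
  rw [h2] at h
  rw [h]
  have hrc : ((r : ℂ)) ≠ 0 := by
    simpa using hr.ne'
  have : ((1 / r : ℝ) : ℂ) ^ (z - 1) = (r : ℂ) ^ (1 - z) := by
    rw [show ((1 / r : ℝ) : ℂ) = ((r : ℂ))⁻¹ by push_cast; ring]
    rw [Complex.inv_cpow _ _ (by
      rw [Complex.arg_ofReal_of_nonneg hr.le]; exact (Real.pi_ne_zero).symm)]
    rw [← Complex.cpow_neg, neg_sub]
  rw [show ((1 / r : ℂ)) = ((1 / r : ℝ) : ℂ) by push_cast; ring, this]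
  ring

lemma repr_Abin (u : ℝ) (hu : 0 < u) {z : ℂ} (hz : 1 < z.re) (n : ℕ) :
    Complex.Gamma (z - 1) * Abin u z n
      = ∫ t in Ioi (0:ℝ), (t : ℂ) ^ (z - 2) * Complex.exp (-(u * t)) *
          ((1 : ℂ) - Complex.exp (-(t : ℂ))) ^ n := by
  rw [Abin, Finset.mul_sum]
  have hterm : ∀ k : ℕ, Complex.Gamma (z - 1) *
      ((-1 : ℂ) ^ k * (n.choose k : ℂ) * ((k + u : ℝ) : ℂ) ^ (1 - z))
      = ∫ t in Ioi (0:ℝ), ((-1 : ℂ) ^ k * (n.choose k : ℂ)) *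
          ((t : ℂ) ^ (z - 2) * Complex.exp (-((((k : ℝ) + u : ℝ) : ℂ) * t))) := by
    intro k
    have hk : (0 : ℝ) < (k : ℝ) + u := by positivity
    rw [MeasureTheory.integral_const_mul, ← mellin_term hz hk]
    rw [show (((k : ℝ) + u : ℝ) : ℂ) = (((k + u : ℝ)) : ℂ) by push_cast; ring]
    ring
  simp_rw [hterm]
  rw [← MeasureTheory.integral_finset_sum]
  · refine setIntegral_congr_fun measurableSet_Ioi (fun t ht => ?_)
    rw [Set.mem_Ioi] at ht
    have hexp : ∀ k : ℕ, Complex.exp (-((((k : ℝ) + u : ℝ) : ℂ) * t))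
        = Complex.exp (-(u * t)) * Complex.exp (-(t : ℂ)) ^ k := by
      intro k
      rw [← Complex.exp_nat_mul, ← Complex.exp_add]
      congr 1
      push_cast
      ring
    have hbin : ((1 : ℂ) - Complex.exp (-(t : ℂ))) ^ n
        = ∑ k ∈ Finset.range (n + 1),
            (-1 : ℂ) ^ k * (n.choose k : ℂ) * Complex.exp (-(t : ℂ)) ^ k := by
      rw [sub_eq_add_neg, add_comm, add_pow]
      refine Finset.sum_congr rfl (fun k hk => ?_)
      rw [neg_pow]
      ring
    rw [hbin, Finset.mul_sum]
    refine Finset.sum_congr rfl (fun k hk => ?_)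
    rw [hexp k]
    ring
  · intro k hk
    have hkpos : (0 : ℝ) < (k : ℝ) + u := by positivity
    rw [show z - 2 = z - 1 - 1 by ring]
    exact (intC (z := z - 1) (by simp [Complex.sub_re]; linarith) hkpos).const_mul _



noncomputable def Ip (u p : ℝ) (n : ℕ) : ℝ :=
  ∫ t in Ioi (0:ℝ), t ^ p * Real.exp (-u * t) * (1 - Real.exp (-t)) ^ n

lemma Ip_cont (p : ℝ) (n : ℕ) :
    ContinuousOn (fun t : ℝ => t ^ p * Real.exp (-u * t) * (1 - Real.exp (-t)) ^ n) (Ioi 0) := by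
  refine ContinuousOn.mul (ContinuousOn.mul ?_ (Continuous.continuousOn (by continuity)))
    (Continuous.continuousOn (by continuity))
  exact fun x hx => (Real.continuousAt_rpow_const x p (Or.inl (ne_of_gt hx))).continuousWithinAt

lemma Ip_intble {u p : ℝ} (hu : 0 < u) (hp : -1 < p) (n : ℕ) :
    IntegrableOn (fun t : ℝ => t ^ p * Real.exp (-u * t) * (1 - Real.exp (-t)) ^ n) (Ioi 0) := by
  refine Integrable.mono' (int_exp hp hu)
    ((Ip_cont p n).aestronglyMeasurable measurableSet_Ioi) ?_
  filter_upwards [ae_restrict_mem measurableSet_Ioi] with t ht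
  rw [Set.mem_Ioi] at ht
  have h1 : 0 ≤ 1 - Real.exp (-t) := by
    have := Real.exp_le_one_iff.mpr (by linarith : -t ≤ 0)
    linarith
  have h2 : (1 - Real.exp (-t)) ^ n ≤ 1 := by
    apply pow_le_one₀ h1
    have := Real.exp_pos (-t); linarith
  have h3 : (0:ℝ) ≤ t ^ p * Real.exp (-u * t) := by positivity
  rw [Real.norm_eq_abs, abs_of_nonneg (by positivity)]
  calc t ^ p * Real.exp (-u * t) * (1 - Real.exp (-t)) ^ n
      ≤ t ^ p * Real.exp (-u * t) * 1 := by
        exact mul_le_mul_of_nonneg_left h2 h3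
    _ = t ^ p * Real.exp (-u * t) := by ring

lemma Ip_nonneg {u p : ℝ} (n : ℕ) : 0 ≤ Ip u p n := by
  refine setIntegral_nonneg measurableSet_Ioi (fun t ht => ?_)
  rw [Set.mem_Ioi] at ht
  have h1 : 0 ≤ 1 - Real.exp (-t) := by
    have := Real.exp_le_one_iff.mpr (by linarith : -t ≤ 0); linarith
  positivity

lemma Ip_tendsto {u p : ℝ} (hu : 0 < u) (hp : -1 < p) :
    Tendsto (Ip u p) atTop (nhds 0) := by
  have h0 : (0:ℝ) = ∫ t in Ioi (0:ℝ), (0:ℝ) := by simp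
  rw [h0]
  refine tendsto_integral_of_dominated_convergence (fun t => t ^ p * Real.exp (-u * t))
    (fun n => (Ip_cont p n).aestronglyMeasurable measurableSet_Ioi)
    (int_exp hp hu) (fun n => ?_) ?_
  · filter_upwards [ae_restrict_mem measurableSet_Ioi] with t ht
    rw [Set.mem_Ioi] at ht
    have h1 : 0 ≤ 1 - Real.exp (-t) := by
      have := Real.exp_le_one_iff.mpr (by linarith : -t ≤ 0); linarith
    have h2 : (1 - Real.exp (-t)) ^ n ≤ 1 := by
      apply pow_le_one₀ h1
      have := Real.exp_pos (-t); linarith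
    have h3 : (0:ℝ) ≤ t ^ p * Real.exp (-u * t) := by positivity
    rw [Real.norm_eq_abs, abs_of_nonneg (by positivity)]
    calc t ^ p * Real.exp (-u * t) * (1 - Real.exp (-t)) ^ n
        ≤ t ^ p * Real.exp (-u * t) * 1 := mul_le_mul_of_nonneg_left h2 h3
      _ = t ^ p * Real.exp (-u * t) := by ring
  · filter_upwards [ae_restrict_mem measurableSet_Ioi] with t ht
    rw [Set.mem_Ioi] at ht
    have h1 : 0 ≤ 1 - Real.exp (-t) := by
      have := Real.exp_le_one_iff.mpr (by linarith : -t ≤ 0); linarith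
    have h2 : 1 - Real.exp (-t) < 1 := by
      have := Real.exp_pos (-t); linarith
    have : Tendsto (fun n : ℕ => (1 - Real.exp (-t)) ^ n) atTop (nhds 0) :=
      tendsto_pow_atTop_nhds_zero_of_lt_one h1 h2
    have := this.const_mul (t ^ p * Real.exp (-u * t))
    simpa using this

lemma Ip_summable {u p : ℝ} (hu : 0 < u) (hp : -1 < p) :
    Summable (fun n : ℕ => (1 / (n + 1) : ℝ) * Ip u p n) := by
  set C : ℝ := ∫ t in Ioi (0:ℝ), t ^ p * Real.exp (-u * t) * (1 + t) with hC
  refine summable_of_sum_range_le (c := C) (fun n => ?_) (fun N => ?_)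
  · have := Ip_nonneg (u := u) (p := p) n
    positivity
  · have hint : ∀ n : ℕ, IntegrableOn
        (fun t : ℝ => (1 / (n + 1) : ℝ) * (t ^ p * Real.exp (-u * t) * (1 - Real.exp (-t)) ^ n))
        (Ioi 0) := fun n => (Ip_intble hu hp n).const_mul _
    have hsum : ∑ n ∈ Finset.range N, (1 / (n + 1) : ℝ) * Ip u p n
        = ∫ t in Ioi (0:ℝ), ∑ n ∈ Finset.range N,
            (1 / (n + 1) : ℝ) * (t ^ p * Real.exp (-u * t) * (1 - Real.exp (-t)) ^ n) := by
      rw [MeasureTheory.integral_finset_sum _ (fun n _ => hint n)]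
      refine Finset.sum_congr rfl (fun n _ => ?_)
      rw [Ip, MeasureTheory.integral_const_mul]
    rw [hsum, hC]
    have hRint : IntegrableOn (fun t : ℝ => t ^ p * Real.exp (-u * t) * (1 + t)) (Ioi 0) := by
      have h2 : IntegrableOn (fun t : ℝ => t ^ (p+1) * Real.exp (-u*t)) (Ioi 0) :=
        int_exp (by linarith) hu
      have h3 : IntegrableOn
          (fun t : ℝ => t ^ p * Real.exp (-u*t) + t^(p+1)*Real.exp (-u*t)) (Ioi 0) :=
        (int_exp hp hu).add h2
      refine h3.congr_fun (fun t ht => ?_) measurableSet_Ioi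
      rw [Set.mem_Ioi] at ht
      beta_reduce
      rw [Real.rpow_add ht, Real.rpow_one]
      ring
    refine setIntegral_mono_on (integrable_finset_sum _ (fun n _ => hint n)) hRint
      measurableSet_Ioi (fun t ht => ?_)
    rw [Set.mem_Ioi] at ht
    set x : ℝ := 1 - Real.exp (-t) with hx
    have hx0 : 0 < x := by
      have : Real.exp (-t) < 1 := Real.exp_lt_one_iff.mpr (by linarith)
      simp [hx]; linarith
    have hx1 : x < 1 := by
      have := Real.exp_pos (-t); simp [hx]; linarith
    have hlog : HasSum (fun n : ℕ => x ^ (n + 1) / (n + 1)) t := by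
      have h := Real.hasSum_pow_div_log_of_abs_lt_one
        (x := x) (by rw [abs_of_nonneg hx0.le]; exact hx1)
      have : 1 - x = Real.exp (-t) := by simp [hx]
      rwa [this, Real.log_exp, neg_neg] at h
    have hpart : ∑ n ∈ Finset.range N, x ^ (n + 1) / (n + 1) ≤ t := by
      refine Summable.sum_le_tsum _ (fun n _ => by positivity) hlog.summable |>.trans ?_
      rw [hlog.tsum_eq]
    have hkey : ∑ n ∈ Finset.range N, (1 / (n + 1) : ℝ) * x ^ n ≤ 1 + t := by
      have hmul : (∑ n ∈ Finset.range N, (1 / (n + 1) : ℝ) * x ^ n) * x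
          = ∑ n ∈ Finset.range N, x ^ (n + 1) / (n + 1) := by
        rw [Finset.sum_mul]
        refine Finset.sum_congr rfl (fun n _ => ?_)
        rw [pow_succ]; ring
      have hineq : (∑ n ∈ Finset.range N, (1 / (n + 1) : ℝ) * x ^ n) * x ≤ (1 + t) * x := by
        rw [hmul]
        refine hpart.trans ?_
        have h1 : t + 1 ≤ Real.exp t := Real.add_one_le_exp t
        have h2 : Real.exp (-t) = 1 / Real.exp t := by
          rw [Real.exp_neg]; ring
        have hexp := Real.exp_pos t
        rw [hx, h2]
        rw [mul_sub, mul_one]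
        have : (1 + t) * (1 / Real.exp t) ≤ 1 := by
          rw [mul_one_div, div_le_one hexp]; linarith
        nlinarith [Real.exp_pos t]
      exact le_of_mul_le_mul_right hineq hx0
    calc ∑ n ∈ Finset.range N,
          (1 / (n + 1) : ℝ) * (t ^ p * Real.exp (-u * t) * x ^ n)
        = (t ^ p * Real.exp (-u * t)) * ∑ n ∈ Finset.range N, (1 / (n + 1) : ℝ) * x ^ n := by
          rw [Finset.mul_sum]; exact Finset.sum_congr rfl (fun n _ => by ring)
      _ ≤ (t ^ p * Real.exp (-u * t)) * (1 + t) := by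
          refine mul_le_mul_of_nonneg_left hkey (by positivity)



lemma natid (n k : ℕ) : (n + 1 - k) * (n + 1).choose k = (n + 1) * n.choose k := by
  rw [Nat.add_one_mul_choose_eq, Nat.choose_succ_right_eq]
  exact Nat.mul_comm _ _

lemma cpow_split (u : ℝ) (hu : 0 < u) (s : ℂ) (k : ℕ) :
    (((k : ℝ) + u : ℝ) : ℂ) ^ (1 - (s - 1))
      = (((k : ℝ) + u : ℝ) : ℂ) * (((k : ℝ) + u : ℝ) : ℂ) ^ (1 - s) := by
  have hne : (((k : ℝ) + u : ℝ) : ℂ) ≠ 0 := by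
    simp only [ne_eq, Complex.ofReal_eq_zero]
    positivity
  rw [show (1 : ℂ) - (s - 1) = 1 + (1 - s) by ring, Complex.cpow_add _ _ hne, Complex.cpow_one]

lemma alg (u : ℝ) (hu : 0 < u) (s : ℂ) (n : ℕ) :
    ((n : ℂ) + u) * Abin u s n - Abin u (s - 1) n = (n : ℂ) * Abin u s (n - 1) := by
  cases n with
  | zero =>
    simp only [Nat.cast_zero, zero_add, zero_mul, Abin, Finset.range_one, Finset.sum_singleton,
      pow_zero, Nat.choose_self, Nat.cast_one, one_mul, Nat.cast_zero]
    have h := cpow_split u hu s 0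
    push_cast at h ⊢
    simp only [zero_add] at h
    linear_combination -h
  | succ n =>
    have step : ∀ k ∈ Finset.range (n + 2),
        (((n : ℂ) + 1) + u) * ((-1 : ℂ) ^ k * ((n+1).choose k : ℂ) * ((k + u : ℝ) : ℂ) ^ (1 - s))
          - (-1 : ℂ) ^ k * ((n+1).choose k : ℂ) * ((k + u : ℝ) : ℂ) ^ (1 - (s - 1))
        = ((n : ℂ) + 1) * ((-1 : ℂ) ^ k * (n.choose k : ℂ) * ((k + u : ℝ) : ℂ) ^ (1 - s)) := by
      intro k hk
      rw [Finset.mem_range] at hk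
      have hk' : k ≤ n + 1 := by omega
      rw [cpow_split u hu s k]
      push_cast
      have hnat := natid n k
      have h2 : (((n + 1 - k) * ((n+1).choose k) : ℕ) : ℂ)
          = (((n + 1) * n.choose k : ℕ) : ℂ) := by exact_mod_cast congrArg (Nat.cast : ℕ → ℂ) hnat
      push_cast [Nat.cast_sub hk'] at h2
      linear_combination ((-1 : ℂ) ^ k * (((k : ℂ) + (u : ℂ)) ^ (1 - s))) * h2
    have lhs_eq : (((n + 1 : ℕ) : ℂ) + u) * Abin u s (n+1) - Abin u (s - 1) (n+1)
        = ∑ k ∈ Finset.range (n + 2),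
            ((n : ℂ) + 1) * ((-1 : ℂ) ^ k * (n.choose k : ℂ) * ((k + u : ℝ) : ℂ) ^ (1 - s)) := by
      rw [Abin, Abin, Finset.mul_sum, ← Finset.sum_sub_distrib]
      refine Finset.sum_congr rfl (fun k hk => ?_)
      have := step k hk
      push_cast at this ⊢
      linear_combination this
    rw [lhs_eq, Finset.sum_range_succ, Nat.choose_succ_self]
    simp only [Nat.cast_zero, mul_zero, zero_mul, add_zero]
    rw [← Finset.mul_sum]
    have hA : ∑ k ∈ Finset.range (n + 1),
        (-1 : ℂ) ^ k * (n.choose k : ℂ) * ((k + u : ℝ) : ℂ) ^ (1 - s) = Abin u s n := rfl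
    rw [hA, Nat.succ_sub_one]
    push_cast
    ring

lemma cne (n : ℕ) (x : ℝ) (hx : 0 < x) : ((n : ℂ) + (x : ℂ)) ≠ 0 := by
  rw [show ((n : ℂ) + (x : ℂ)) = ((((n : ℝ) + x) : ℝ) : ℂ) by push_cast; ring]
  simp only [ne_eq, Complex.ofReal_eq_zero]
  positivity

lemma abin_norm (u : ℝ) (hu : 0 < u) {z : ℂ} (hz : 1 < z.re) (n : ℕ) :
    ‖Complex.Gamma (z - 1)‖ * ‖Abin u z n‖ ≤ Ip u (z.re - 2) n := by
  rw [← norm_mul, repr_Abin u hu hz n]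
  refine (norm_integral_le_integral_norm _).trans (le_of_eq ?_)
  refine setIntegral_congr_fun measurableSet_Ioi (fun t ht => ?_)
  rw [Set.mem_Ioi] at ht
  have h1 : (1 : ℂ) - Complex.exp (-(t : ℂ)) = ((1 - Real.exp (-t) : ℝ) : ℂ) := by
    push_cast [Complex.ofReal_exp]
    ring
  have h0 : 0 ≤ 1 - Real.exp (-t) := by
    have := Real.exp_le_one_iff.mpr (by linarith : -t ≤ 0); linarith
  rw [norm_mul, norm_mul, norm_pow, h1, Complex.norm_cpow_eq_rpow_re_of_pos ht, Complex.norm_exp,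
    Complex.norm_real, Real.norm_eq_abs, abs_of_nonneg h0]
  have hre : (z - 2).re = z.re - 2 := by simp [Complex.sub_re]
  have hre2 : (-((u : ℂ) * (t : ℂ))).re = -u * t := by simp
  rw [hre, hre2]

lemma gamma_ne (z : ℂ) (hz : 1 < z.re) : Complex.Gamma (z - 1) ≠ 0 :=
  Complex.Gamma_ne_zero_of_re_pos (by simp [Complex.sub_re]; linarith)

lemma abin_le (u : ℝ) (hu : 0 < u) {z : ℂ} (hz : 1 < z.re) (n : ℕ) :
    ‖Abin u z n‖ ≤ Ip u (z.re - 2) n / ‖Complex.Gamma (z - 1)‖ := by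
  have hG : 0 < ‖Complex.Gamma (z - 1)‖ := norm_pos_iff.mpr (gamma_ne z hz)
  rw [le_div_iff₀ hG, mul_comm]
  exact abin_norm u hu hz n

lemma sum_aux (u : ℝ) (hu : 0 < u) {z : ℂ} (hz : 1 < z.re) {c : ℕ → ℂ} {K : ℝ}
    (hK : 0 ≤ K) (hc : ∀ n : ℕ, ‖c n‖ ≤ K / (n + 1)) :
    Summable (fun n : ℕ => c n * Abin u z n) := by
  have hG : 0 < ‖Complex.Gamma (z - 1)‖ := norm_pos_iff.mpr (gamma_ne z hz)
  refine Summable.of_norm_bounded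
    (g := fun n : ℕ => (K / ‖Complex.Gamma (z - 1)‖) * ((1 / (n + 1) : ℝ) * Ip u (z.re - 2) n))
    ((Ip_summable hu (by linarith)).mul_left _) (fun n => ?_)
  rw [norm_mul]
  have h1 := hc n
  have h2 := abin_le u hu hz n
  have hn1 : (0:ℝ) < (n:ℝ) + 1 := by positivity
  have hA : 0 ≤ ‖Abin u z n‖ := norm_nonneg _
  have hIp : 0 ≤ Ip u (z.re - 2) n := Ip_nonneg n
  calc ‖c n‖ * ‖Abin u z n‖ ≤ (K / (n + 1)) * (Ip u (z.re - 2) n / ‖Complex.Gamma (z - 1)‖) := by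
        refine mul_le_mul h1 h2 hA (by positivity)
    _ = (K / ‖Complex.Gamma (z - 1)‖) * ((1 / (n + 1) : ℝ) * Ip u (z.re - 2) n) := by
        field_simp

theorem stmt_3 (u : ℝ) (hu : 0 < u) (s : ℂ) (hs : 2 < s.re) (α : ℝ) (hα : 0 < α) :
    (α : ℂ) * Salpha α s u =
      Salpha (α - 1) (s - 1) u + ((α : ℂ) - (u : ℂ)) * Salpha (α - 1) s u := by
  have hs1 : 1 < s.re := by linarith
  have hs1' : 1 < (s - 1).re := by simp [Complex.sub_re]; linarith
  set a : ℕ → ℂ := Abin u s with ha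
  set b : ℕ → ℂ := Abin u (s - 1) with hb
  set f1 : ℕ → ℂ := fun n => (1 / ((n : ℂ) + (α : ℂ))) * b n with hf1
  set f2 : ℕ → ℂ := fun n => (1 / ((n : ℂ) + (α : ℂ))) * a n with hf2
  set f3 : ℕ → ℂ := fun n => (1 / ((n : ℂ) + (α : ℂ) + 1)) * a n with hf3
  -- coefficient bounds
  have hco1 : ∀ n : ℕ, ‖(1 / ((n : ℂ) + (α : ℂ)))‖ ≤ (1 + 1/α) / (n + 1) := by
    intro n
    rw [show ((n : ℂ) + (α : ℂ)) = ((((n : ℝ) + α) : ℝ) : ℂ) by push_cast; ring]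
    rw [norm_div, norm_one, Complex.norm_real, Real.norm_eq_abs,
      abs_of_pos (by positivity : (0:ℝ) < (n:ℝ) + α)]
    rw [div_le_div_iff₀ (by positivity) (by positivity)]
    have h1 : (0:ℝ) ≤ (n:ℝ) / α := by positivity
    have h2 : (1/α) * α = 1 := by field_simp
    have h3 : (0:ℝ) ≤ (1/α) * (n:ℝ) := by positivity
    nlinarith [hα, Nat.cast_nonneg (α := ℝ) n]
  have hco3 : ∀ n : ℕ, ‖(1 / ((n : ℂ) + (α : ℂ) + 1))‖ ≤ 1 / (n + 1) := by
    intro n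
    rw [show ((n : ℂ) + (α : ℂ) + 1) = ((((n : ℝ) + α + 1) : ℝ) : ℂ) by push_cast; ring]
    rw [norm_div, norm_one, Complex.norm_real, Real.norm_eq_abs,
      abs_of_pos (by positivity : (0:ℝ) < (n:ℝ) + α + 1)]
    rw [div_le_div_iff₀ (by positivity) (by positivity)]
    nlinarith [hα, Nat.cast_nonneg (α := ℝ) n]
  have hKpos : (0:ℝ) ≤ 1 + 1/α := by positivity
  have hsum1 : Summable f1 := sum_aux u hu hs1' hKpos hco1
  have hsum2 : Summable f2 := sum_aux u hu hs1 hKpos hco1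
  have hsum3 : Summable f3 := sum_aux u hu hs1 zero_le_one hco3
  -- identification with Salpha
  have hS3 : Salpha α s u = ∑' n, f3 n := rfl
  have hS1 : Salpha (α - 1) (s - 1) u = ∑' n, f1 n := by
    refine tsum_congr (fun n => ?_)
    rw [show ((n : ℂ) + ((α - 1 : ℝ) : ℂ) + 1) = ((n : ℂ) + (α : ℂ)) by push_cast; ring]
    rfl
  have hS2 : Salpha (α - 1) s u = ∑' n, f2 n := by
    refine tsum_congr (fun n => ?_)
    rw [show ((n : ℂ) + ((α - 1 : ℝ) : ℂ) + 1) = ((n : ℂ) + (α : ℂ)) by push_cast; ring]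
    rfl
  -- telescoping
  set B : ℕ → ℂ := fun n => ((n : ℂ) / ((n : ℂ) + (α : ℂ))) * a (n - 1) with hBdef
  have hB0 : B 0 = 0 := by simp [hBdef]
  have hD : ∀ n : ℕ, (f1 n + ((α : ℂ) - u) * f2 n) - (α : ℂ) * f3 n = B (n + 1) - B n := by
    intro n
    have halg := alg u hu s n
    have hbn : b n = ((n : ℂ) + u) * a n - (n : ℂ) * a (n - 1) := by
      rw [hb, ha]
      linear_combination -halg
    have d1 : ((n : ℂ) + (α : ℂ)) ≠ 0 := cne n α hα
    have d2 : ((n : ℂ) + (α : ℂ) + 1) ≠ 0 := by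
      have := cne n (α + 1) (by linarith)
      push_cast at this ⊢
      intro h; exact this (by linear_combination h)
    have d3 : ((n : ℂ) + 1 + (α : ℂ)) ≠ 0 := by
      intro h; exact d2 (by linear_combination h)
    simp only [hf1, hf2, hf3, hBdef, hbn, Nat.add_sub_cancel]
    push_cast
    field_simp
    ring
  set D : ℕ → ℂ := fun n => (f1 n + ((α : ℂ) - u) * f2 n) - (α : ℂ) * f3 n with hDdef
  have hsumD : Summable D := (hsum1.add (hsum2.mul_left _)).sub (hsum3.mul_left _)
  -- B tends to 0
  have hG : 0 < ‖Complex.Gamma (s - 1)‖ := norm_pos_iff.mpr (gamma_ne s hs1)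
  have haten : Tendsto (fun n => ‖a n‖) atTop (nhds 0) := by
    refine squeeze_zero (fun n => norm_nonneg _) (fun n => abin_le u hu hs1 n) ?_
    have := (Ip_tendsto hu (by linarith : (-1:ℝ) < s.re - 2)).div_const ‖Complex.Gamma (s - 1)‖
    simpa using this
  have hBten : Tendsto B atTop (nhds 0) := by
    refine squeeze_zero_norm (fun n => ?_) (haten.comp (tendsto_sub_atTop_nat 1))
    rw [hBdef]
    simp only [norm_mul, Function.comp]
    have hc : ‖((n : ℂ) / ((n : ℂ) + (α : ℂ)))‖ ≤ 1 := by
      rw [show ((n : ℂ) / ((n : ℂ) + (α : ℂ))) = ((((n : ℝ) / ((n : ℝ) + α)) : ℝ) : ℂ) by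
        push_cast; ring]
      rw [Complex.norm_real, Real.norm_eq_abs, abs_of_nonneg (by positivity)]
      rw [div_le_one (by positivity)]
      linarith
    calc ‖((n : ℂ) / ((n : ℂ) + (α : ℂ)))‖ * ‖a (n - 1)‖ ≤ 1 * ‖a (n - 1)‖ :=
          mul_le_mul_of_nonneg_right hc (norm_nonneg _)
      _ = ‖a (n - 1)‖ := one_mul _
  have htsumD : ∑' n, D n = 0 := by
    have hhs : Tendsto (fun N => ∑ i ∈ Finset.range N, D i) atTop (nhds (∑' n, D n)) :=
      hsumD.hasSum.tendsto_sum_nat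
    have heq : ∀ N : ℕ, ∑ i ∈ Finset.range N, D i = B N := by
      intro N
      rw [Finset.sum_congr rfl (fun i _ => hD i), Finset.sum_range_sub B N, hB0, sub_zero]
    rw [funext heq] at hhs
    exact tendsto_nhds_unique hhs hBten
  have key : (∑' n, f1 n) + ((α : ℂ) - u) * (∑' n, f2 n) - (α : ℂ) * (∑' n, f3 n) = 0 := by
    rw [← tsum_mul_left (a := (α : ℂ) - u), ← tsum_mul_left (a := (α : ℂ))]
    rw [← Summable.tsum_add hsum1 (hsum2.mul_left _), ← Summable.tsum_sub (hsum1.add (hsum2.mul_left _))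
      (hsum3.mul_left _)]
    exact htsumD
  rw [hS1, hS2, hS3]
  linear_combination -key
end

section
/- For every positive integer m and real u > 0, the (finite) identity ∑_{n=0}^m (1/(n+d+1)) ∑_{k=0}^n (-1)^k C(n,k) (k+u)^m = (1/d!) ∑_{k=0}^d [d+1-u, k+1-u]_{1-u} * B_{m+k}(u) holds for every integer d ≥ 0, where B_j(u) denotes the j-th Bernoulli polynomial evaluated at u. -/
/-- Shifted r-Stirling number `[n+r, m+r]_r`: the coefficient of `x^m` in
`(x+r)(x+r+1)⋯(x+r+n-1)`. -/
noncomputable def rStirling {R : Type*} [CommRing R] (r : R) (n m : ℕ) : R :=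
  (∏ i ∈ Finset.range n, (Polynomial.X + Polynomial.C (r + (i : R)))).coeff m

open Finset Polynomial
/-- the alternating binomial sum -/
noncomputable def AA (u : ℝ) (n m : ℕ) : ℝ :=
  ∑ k ∈ Finset.range (n + 1), (-1 : ℝ) ^ k * (n.choose k : ℝ) * ((k : ℝ) + u) ^ m

lemma AA_zero (u : ℝ) (m : ℕ) : AA u 0 m = u ^ m := by
  simp [AA]

lemma AA_succ (u : ℝ) (n m : ℕ) : AA u (n + 1) m = AA u n m - AA (u + 1) n m := by
  have h1 : AA u (n + 1) m
      = (∑ i ∈ Finset.range (n + 1),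
          ((-1 : ℝ) ^ (i + 1) * (n.choose i : ℝ) * (((i : ℝ) + 1) + u) ^ m
            + (-1 : ℝ) ^ (i + 1) * (n.choose (i + 1) : ℝ) * (((i : ℝ) + 1) + u) ^ m))
        + u ^ m := by
    rw [AA, Finset.sum_range_succ']
    congr 1
    · refine Finset.sum_congr rfl fun i _ => ?_
      rw [Nat.choose_succ_succ]
      push_cast
      ring
    · simp
  rw [h1, Finset.sum_add_distrib]
  have h2 : (∑ i ∈ Finset.range (n + 1),
      (-1 : ℝ) ^ (i + 1) * (n.choose i : ℝ) * (((i : ℝ) + 1) + u) ^ m) = -AA (u + 1) n m := by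
    rw [AA, ← Finset.sum_neg_distrib]
    refine Finset.sum_congr rfl fun i _ => ?_
    ring_nf
  have h3 : (∑ i ∈ Finset.range (n + 1),
      (-1 : ℝ) ^ (i + 1) * (n.choose (i + 1) : ℝ) * (((i : ℝ) + 1) + u) ^ m) + u ^ m
      = AA u n m := by
    rw [Finset.sum_range_succ]
    simp only [Nat.choose_succ_self, Nat.cast_zero, mul_zero, zero_mul, mul_zero, add_zero]
    rw [AA, Finset.sum_range_succ']
    congr 1
    · refine Finset.sum_congr rfl fun i _ => ?_
      push_cast
      ring
    · simp
  rw [add_assoc, h2, h3]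
  ring

lemma AA_shift_binom (u : ℝ) (n m : ℕ) :
    AA (u + 1) n m = ∑ j ∈ Finset.range (m + 1), (m.choose j : ℝ) * AA u n j := by
  have h : ∀ k : ℕ, ((k : ℝ) + (u + 1)) ^ m
      = ∑ j ∈ Finset.range (m + 1), (m.choose j : ℝ) * ((k : ℝ) + u) ^ j := by
    intro k
    rw [show (k : ℝ) + (u + 1) = ((k : ℝ) + u) + 1 by ring, add_pow]
    refine Finset.sum_congr rfl fun j _ => ?_
    ring
  unfold AA
  simp_rw [h, Finset.mul_sum]
  rw [Finset.sum_comm]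
  refine Finset.sum_congr rfl fun j _ => Finset.sum_congr rfl fun k _ => by ring

lemma AA_vanish (u : ℝ) : ∀ m n : ℕ, m < n → AA u n m = 0 := by
  intro m
  induction m using Nat.strong_induction_on with
  | _ m ih =>
    intro n hn
    obtain ⟨n₀, rfl⟩ : ∃ n₀, n = n₀ + 1 := ⟨n - 1, by omega⟩
    rw [AA_succ, AA_shift_binom, Finset.sum_range_succ, Nat.choose_self]
    have hz : ∀ j ∈ Finset.range m, (m.choose j : ℝ) * AA u n₀ j = 0 := by
      intro j hj
      rw [ih j (Finset.mem_range.mp hj) n₀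
        (lt_of_lt_of_le (Finset.mem_range.mp hj) (Nat.lt_succ_iff.mp hn)), mul_zero]
    rw [Finset.sum_eq_zero hz]
    simp

lemma AA_mul (u : ℝ) (n m : ℕ) :
    AA u (n + 1) (m + 1) = (u + (n : ℝ) + 1) * AA u (n + 1) m - ((n : ℝ) + 1) * AA u n m := by
  have key : AA u (n + 1) (m + 1)
      = u * AA u (n + 1) m - ((n : ℝ) + 1) * AA (u + 1) n m := by
    have h1 : AA u (n + 1) (m + 1)
        = u * AA u (n + 1) m
          + ∑ k ∈ Finset.range (n + 2),
              (-1 : ℝ) ^ k * ((n + 1).choose k : ℝ) * (k : ℝ) * ((k : ℝ) + u) ^ m := by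
      rw [AA, AA, Finset.mul_sum, ← Finset.sum_add_distrib]
      refine Finset.sum_congr rfl fun k _ => ?_
      rw [pow_succ]
      ring
    have h2 : (∑ k ∈ Finset.range (n + 2),
        (-1 : ℝ) ^ k * ((n + 1).choose k : ℝ) * (k : ℝ) * ((k : ℝ) + u) ^ m)
        = -(((n : ℝ) + 1) * AA (u + 1) n m) := by
      rw [Finset.sum_range_succ']
      simp only [Nat.cast_zero, mul_zero, zero_mul, add_zero]
      rw [AA, Finset.mul_sum, ← Finset.sum_neg_distrib]
      refine Finset.sum_congr rfl fun i _ => ?_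
      have hcc : ((i : ℝ) + 1) * ((n + 1).choose (i + 1) : ℝ) = ((n : ℝ) + 1) * (n.choose i : ℝ) := by
        have := Nat.add_one_mul_choose_eq n i
        have := congrArg (fun x : ℕ => (x : ℝ)) this
        push_cast at this
        linarith [this]
      have hgoal : (-1 : ℝ) ^ (i + 1) * ((n + 1).choose (i + 1) : ℝ) * ((i : ℝ) + 1) * (((i : ℝ) + 1) + u) ^ m
          = -(((n : ℝ) + 1) * ((-1 : ℝ) ^ i * (n.choose i : ℝ) * ((i : ℝ) + (u + 1)) ^ m)) := by
        rw [show ((i : ℝ) + 1) + u = (i : ℝ) + (u + 1) by ring]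
        calc (-1 : ℝ) ^ (i + 1) * ((n + 1).choose (i + 1) : ℝ) * ((i : ℝ) + 1) * ((i : ℝ) + (u + 1)) ^ m
            = (-1 : ℝ) ^ i * (((i : ℝ) + 1) * ((n + 1).choose (i + 1) : ℝ)) * ((i : ℝ) + (u + 1)) ^ m * (-1) := by
              rw [pow_succ]; ring
          _ = (-1 : ℝ) ^ i * (((n : ℝ) + 1) * (n.choose i : ℝ)) * ((i : ℝ) + (u + 1)) ^ m * (-1) := by
              rw [hcc]
          _ = -(((n : ℝ) + 1) * ((-1 : ℝ) ^ i * (n.choose i : ℝ) * ((i : ℝ) + (u + 1)) ^ m)) := by ring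
      push_cast
      push_cast at hgoal
      linarith [hgoal]
    rw [h1, h2]
    ring
  rw [key, AA_succ u n m]
  ring

lemma AA_mul' (u : ℝ) (n m : ℕ) :
    AA u n (m + 1) = (u + (n : ℝ)) * AA u n m - (n : ℝ) * AA u (n - 1) m := by
  cases n with
  | zero => simp [AA_zero, pow_succ, mul_comm]
  | succ n₀ =>
    rw [AA_mul]
    simp only [Nat.add_sub_cancel]
    push_cast
    ring

noncomputable def TT (u : ℝ) (d m : ℕ) : ℝ :=
  ∑ n ∈ Finset.range (m + 1), (1 / ((n : ℝ) + d + 1)) * AA u n m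

lemma TT_succ_m (u : ℝ) (d m : ℕ) :
    TT u d (m + 1) = ∑ n ∈ Finset.range (m + 1),
      ((u + (n : ℝ)) / ((n : ℝ) + d + 1) - ((n : ℝ) + 1) / ((n : ℝ) + d + 2)) * AA u n m := by
  unfold TT
  have h1 : ∀ n : ℕ, (1 / ((n : ℝ) + d + 1)) * AA u n (m + 1)
      = (u + (n : ℝ)) / ((n : ℝ) + d + 1) * AA u n m
        - (n : ℝ) / ((n : ℝ) + d + 1) * AA u (n - 1) m := by
    intro n
    rw [AA_mul']
    ring
  simp_rw [h1]
  rw [Finset.sum_sub_distrib]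
  have h2 : (∑ n ∈ Finset.range (m + 1 + 1),
      (u + (n : ℝ)) / ((n : ℝ) + d + 1) * AA u n m)
      = ∑ n ∈ Finset.range (m + 1), (u + (n : ℝ)) / ((n : ℝ) + d + 1) * AA u n m := by
    rw [Finset.sum_range_succ, AA_vanish u m (m + 1) (Nat.lt_succ_self m), mul_zero, add_zero]
  have h3 : (∑ n ∈ Finset.range (m + 1 + 1),
      (n : ℝ) / ((n : ℝ) + d + 1) * AA u (n - 1) m)
      = ∑ n ∈ Finset.range (m + 1), ((n : ℝ) + 1) / ((n : ℝ) + d + 2) * AA u n m := by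
    rw [Finset.sum_range_succ']
    simp only [Nat.cast_zero, zero_div, zero_mul, add_zero]
    refine Finset.sum_congr rfl fun i _ => ?_
    push_cast
    ring_nf
  rw [h2, h3, ← Finset.sum_sub_distrib]
  refine Finset.sum_congr rfl fun n _ => by ring

lemma Trec (u : ℝ) (d m : ℕ) :
    ((d : ℝ) + 1) * TT u (d + 1) m = TT u d (m + 1) + ((d : ℝ) + 1 - u) * TT u d m := by
  rw [TT_succ_m]
  unfold TT
  rw [Finset.mul_sum, Finset.mul_sum, ← Finset.sum_add_distrib]
  refine Finset.sum_congr rfl fun n _ => ?_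
  push_cast
  have hd1 : ((n : ℝ) + d + 1) ≠ 0 := by positivity
  have hd2 : ((n : ℝ) + d + 2) ≠ 0 := by positivity
  have : ((d : ℝ) + 1) * (1 / ((n : ℝ) + ((d : ℝ) + 1) + 1))
      = (u + (n : ℝ)) / ((n : ℝ) + d + 1) - ((n : ℝ) + 1) / ((n : ℝ) + d + 2)
        + ((d : ℝ) + 1 - u) * (1 / ((n : ℝ) + d + 1)) := by
    have hd2' : ((n : ℝ) + ((d : ℝ) + 1) + 1) ≠ 0 := by positivity
    field_simp
    ring
  linear_combination AA u n m * this

lemma Klem (u : ℝ) : ∀ M : ℕ, ∑ n ∈ Finset.range (M + 1),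
    (1 / ((n : ℝ) + 1)) * AA u (n + 1) (M + 1) = -(((M : ℝ) + 1) * u ^ M) := by
  intro M
  induction M with
  | zero =>
    norm_num [AA, Finset.sum_range_succ]
  | succ M ih =>
    have h1 : ∀ n : ℕ, (1 / ((n : ℝ) + 1)) * AA u (n + 1) (M + 1 + 1)
        = u * ((1 / ((n : ℝ) + 1)) * AA u (n + 1) (M + 1))
          + (AA u (n + 1) (M + 1) - AA u n (M + 1)) := by
      intro n
      rw [AA_mul]
      have : ((n : ℝ) + 1) ≠ 0 := by positivity
      field_simp
      ring
    simp_rw [h1]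
    rw [Finset.sum_add_distrib, Finset.sum_range_sub (fun n => AA u n (M + 1)), ← Finset.mul_sum]
    rw [Finset.sum_range_succ, ih, AA_vanish u (M + 1) (M + 2) (by omega), mul_zero, add_zero,
      AA_zero]
    push_cast
    ring

lemma binomT (u : ℝ) (M : ℕ) :
    ∑ j ∈ Finset.range (M + 1), (((M + 1).choose j : ℕ) : ℝ) * TT u 0 j
      = ((M : ℝ) + 1) * u ^ M := by
  have hT : ∀ j ∈ Finset.range (M + 1),
      (((M + 1).choose j : ℕ) : ℝ) * TT u 0 j
        = ∑ n ∈ Finset.range (M + 1),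
            (((M + 1).choose j : ℕ) : ℝ) * ((1 / ((n : ℝ) + 1)) * AA u n j) := by
    intro j hj
    have hext : TT u 0 j = ∑ n ∈ Finset.range (M + 1), (1 / ((n : ℝ) + 1)) * AA u n j := by
      unfold TT
      rw [Finset.sum_subset (Finset.range_subset_range.mpr
        (Nat.succ_le_succ (Nat.lt_succ_iff.mp (Finset.mem_range.mp hj))))]
      · simp
      · intro n _ hn
        rw [AA_vanish u j n (by simpa using Finset.mem_range.not.mp hn), mul_zero]
    rw [hext, Finset.mul_sum]
  rw [Finset.sum_congr rfl hT, Finset.sum_comm]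
  have hinner : ∀ n : ℕ, (∑ j ∈ Finset.range (M + 1),
      (((M + 1).choose j : ℕ) : ℝ) * ((1 / ((n : ℝ) + 1)) * AA u n j))
      = -((1 / ((n : ℝ) + 1)) * AA u (n + 1) (M + 1)) := by
    intro n
    have hfull : ∑ j ∈ Finset.range (M + 2), (((M + 1).choose j : ℕ) : ℝ) * AA u n j
        = AA (u + 1) n (M + 1) := (AA_shift_binom u n (M + 1)).symm
    have hsplit := Finset.sum_range_succ
      (fun j => (((M + 1).choose j : ℕ) : ℝ) * AA u n j) (M + 1)
    rw [hfull] at hsplit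
    have h2 : ∑ j ∈ Finset.range (M + 1), (((M + 1).choose j : ℕ) : ℝ) * AA u n j
        = AA (u + 1) n (M + 1) - AA u n (M + 1) := by
      simp only [Nat.choose_self, Nat.cast_one, one_mul] at hsplit
      linarith [hsplit]
    have h3 : AA (u + 1) n (M + 1) - AA u n (M + 1) = -AA u (n + 1) (M + 1) := by
      rw [AA_succ]; ring
    calc (∑ j ∈ Finset.range (M + 1),
        (((M + 1).choose j : ℕ) : ℝ) * ((1 / ((n : ℝ) + 1)) * AA u n j))
        = (1 / ((n : ℝ) + 1)) * ∑ j ∈ Finset.range (M + 1),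
            (((M + 1).choose j : ℕ) : ℝ) * AA u n j := by
          rw [Finset.mul_sum]
          exact Finset.sum_congr rfl fun j _ => by ring
      _ = -((1 / ((n : ℝ) + 1)) * AA u (n + 1) (M + 1)) := by rw [h2, h3]; ring
  rw [Finset.sum_congr rfl fun n _ => hinner n, Finset.sum_neg_distrib, Klem u M]
  ring

lemma bern_sum (u : ℝ) (M : ℕ) :
    ∑ j ∈ Finset.range (M + 1), (((M + 1).choose j : ℕ) : ℝ)
        * (Polynomial.aeval u (Polynomial.bernoulli j))
      = ((M : ℝ) + 1) * u ^ M := by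
  have h := congrArg (Polynomial.aeval u) (Polynomial.sum_bernoulli M)
  rw [map_sum] at h
  simp only [map_smul, Polynomial.aeval_monomial] at h
  rw [Finset.sum_congr rfl (fun j _ => ?_)] at h
  · rw [h]
    push_cast
    try ring
  · show (((M + 1).choose j : ℚ)) • (Polynomial.aeval u (Polynomial.bernoulli j))
      = (((M + 1).choose j : ℕ) : ℝ) * (Polynomial.aeval u (Polynomial.bernoulli j))
    rw [Rat.smul_def]
    push_cast
    ring

lemma hasse (u : ℝ) : ∀ M : ℕ, TT u 0 M = Polynomial.aeval u (Polynomial.bernoulli M) := by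
  intro M
  induction M using Nat.strong_induction_on with
  | _ M ih =>
    have h1 := binomT u M
    have h2 := bern_sum u M
    rw [Finset.sum_range_succ] at h1 h2
    have hsum : ∑ j ∈ Finset.range M, (((M + 1).choose j : ℕ) : ℝ) * TT u 0 j
        = ∑ j ∈ Finset.range M, (((M + 1).choose j : ℕ) : ℝ)
            * (Polynomial.aeval u (Polynomial.bernoulli j)) :=
      Finset.sum_congr rfl fun j hj => by rw [ih j (Finset.mem_range.mp hj)]
    have hC : (((M + 1).choose M : ℕ) : ℝ) ≠ 0 := by
      rw [Nat.choose_succ_self_right]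
      positivity
    have : (((M + 1).choose M : ℕ) : ℝ) * TT u 0 M
        = (((M + 1).choose M : ℕ) : ℝ) * (Polynomial.aeval u (Polynomial.bernoulli M)) := by
      rw [hsum] at h1
      linarith [h1, h2]
    exact mul_left_cancel₀ hC this

lemma st_rec (u : ℝ) (d : ℕ) (g : ℕ → ℝ) :
    ∑ k ∈ Finset.range (d + 2), rStirling (1 - u) (d + 1) k * g k
      = (∑ k ∈ Finset.range (d + 1), rStirling (1 - u) d k * g (k + 1))
        + ((d : ℝ) + 1 - u) * ∑ k ∈ Finset.range (d + 1), rStirling (1 - u) d k * g k := by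
  set P : Polynomial ℝ := ∏ i ∈ Finset.range d, (Polynomial.X + Polynomial.C ((1 - u) + (i : ℝ)))
    with hP
  have hdeg : P.natDegree ≤ d := by
    refine le_trans (Polynomial.natDegree_prod_le _ _) ?_
    have : ∀ i ∈ Finset.range d,
        (Polynomial.X + Polynomial.C ((1 - u) + (i : ℝ))).natDegree ≤ 1 :=
      fun i _ => le_of_eq (Polynomial.natDegree_X_add_C _)
    calc (∑ i ∈ Finset.range d,
        (Polynomial.X + Polynomial.C ((1 - u) + (i : ℝ))).natDegree)
        ≤ ∑ _i ∈ Finset.range d, 1 :=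
          Finset.sum_le_sum (f := fun (i : ℕ) => (Polynomial.X + Polynomial.C ((1 - u) + (i : ℝ))).natDegree)
            (g := fun _ => 1) this
      _ = d := by simp
  have hcoef : ∀ k, rStirling (1 - u) (d + 1) k
      = (P * Polynomial.X).coeff k + P.coeff k * ((1 - u) + (d : ℝ)) := by
    intro k
    rw [rStirling, Finset.prod_range_succ, ← hP, mul_add, Polynomial.coeff_add,
      Polynomial.coeff_mul_C]
  have hst : ∀ k, rStirling (1 - u) d k = P.coeff k := fun k => rfl
  simp_rw [hcoef, add_mul, Finset.sum_add_distrib]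
  congr 1
  · rw [Finset.sum_range_succ']
    have h0 : (P * Polynomial.X).coeff 0 = 0 := by
      rw [Polynomial.mul_coeff_zero, Polynomial.coeff_X_zero, mul_zero]
    rw [h0, zero_mul, add_zero]
    refine Finset.sum_congr rfl fun i _ => ?_
    rw [Polynomial.coeff_mul_X, hst]
  · rw [Finset.sum_range_succ, Polynomial.coeff_eq_zero_of_natDegree_lt
      (lt_of_le_of_lt hdeg (Nat.lt_succ_self d)), zero_mul, zero_mul, add_zero,
      Finset.mul_sum]
    refine Finset.sum_congr rfl fun k _ => ?_
    rw [hst]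
    ring

lemma main_id (u : ℝ) (d : ℕ) : ∀ m : ℕ, TT u d m
    = (1 / (d.factorial : ℝ)) * ∑ k ∈ Finset.range (d + 1),
        rStirling (1 - u) d k * (Polynomial.aeval u (Polynomial.bernoulli (m + k))) := by
  induction d with
  | zero =>
    intro m
    have h0 : rStirling (1 - u : ℝ) 0 0 = 1 := by
      rw [rStirling]
      simp
    rw [Finset.sum_range_one, h0]
    simp [hasse u m]
  | succ d ihd =>
    intro m
    have h := Trec u d m
    rw [ihd (m + 1), ihd m] at h
    have hrec := st_rec u d (fun k => Polynomial.aeval u (Polynomial.bernoulli (m + k)))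
    have hg : ∀ k, Polynomial.aeval u (Polynomial.bernoulli (m + (k + 1)))
        = Polynomial.aeval u (Polynomial.bernoulli ((m + 1) + k)) := by
      intro k; rw [show m + (k + 1) = (m + 1) + k by ring]
    simp only [hg] at hrec
    have hfac : ((d + 1).factorial : ℝ) = ((d : ℝ) + 1) * (d.factorial : ℝ) := by
      rw [Nat.factorial_succ]
      push_cast
      ring
    have hd1 : ((d : ℝ) + 1) ≠ 0 := by positivity
    have hdf : (d.factorial : ℝ) ≠ 0 := by positivity
    rw [hfac]
    rw [show (d : ℕ) + 1 + 1 = d + 2 from rfl] at hrec ⊢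
    field_simp at h ⊢
    rw [hrec]
    ring_nf
    ring_nf at h
    linarith [h]

theorem stmt_7 (m : ℕ) (hm : 1 ≤ m) (u : ℝ) (hu : 0 < u) (d : ℕ) :
    (∑ n ∈ Finset.range (m + 1), (1 / ((n : ℝ) + d + 1)) * ∑ k ∈ Finset.range (n + 1),
        (-1 : ℝ) ^ k * (n.choose k : ℝ) * ((k : ℝ) + u) ^ m) =
      (1 / (d.factorial : ℝ)) * ∑ k ∈ Finset.range (d + 1),
        rStirling (1 - u) d k * (Polynomial.aeval u (Polynomial.bernoulli (m + k))) :=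
  main_id u d m
end

section
/- Define t_n(u) = ∏_{k=0}^n (k+u)^((-1)^{k+1} C(n,k)) for real u > 0. Then ∑_{n=1}^∞ (1/n) log(t_n(u)) converges and equals 1/u; equivalently, ∏_{n=1}^∞ t_n(u)^{1/n} = e^{1/u}. -/
open Real Finset Filter MeasureTheory Topology


noncomputable def myQ (n : ℕ) (x : ℝ) : ℝ := ∏ j ∈ Finset.range (n+1), (x + j)

lemma myQ_pos {x : ℝ} (hx : 0 < x) (n : ℕ) : 0 < myQ n x := by
  apply Finset.prod_pos
  intro j _
  positivity

lemma myQ_succ (n : ℕ) (x : ℝ) : myQ (n+1) x = myQ n x * (x + (n+1)) := by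
  simp [myQ, Finset.prod_range_succ]

lemma myQ_succ' (n : ℕ) (x : ℝ) : myQ (n+1) x = x * myQ n (x+1) := by
  rw [myQ, Finset.prod_range_succ']
  push_cast
  rw [myQ]
  ring_nf

noncomputable def myS (n : ℕ) (f : ℕ → ℝ) : ℝ :=
  ∑ k ∈ Finset.range (n+1), (-1:ℝ)^k * (n.choose k : ℝ) * f k

lemma myS_succ (n : ℕ) (f : ℕ → ℝ) :
    myS (n+1) f = myS n f - myS n (fun k => f (k+1)) := by
  have h1 : myS (n+1) f
      = (∑ k ∈ Finset.range (n+1), (-1:ℝ)^(k+1) * ((n+1).choose (k+1) : ℝ) * f (k+1)) + f 0 := by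
    rw [myS, Finset.sum_range_succ']
    simp
  have h2 : ∀ k, ((n+1).choose (k+1) : ℝ) = (n.choose k : ℝ) + (n.choose (k+1) : ℝ) := by
    intro k; rw [Nat.choose_succ_succ]; push_cast; ring
  rw [h1]
  have h3 : (∑ k ∈ Finset.range (n+1), (-1:ℝ)^(k+1) * ((n+1).choose (k+1) : ℝ) * f (k+1))
      = (∑ k ∈ Finset.range (n+1), (-1:ℝ)^(k+1) * (n.choose k : ℝ) * f (k+1))
        + (∑ k ∈ Finset.range (n+1), (-1:ℝ)^(k+1) * (n.choose (k+1) : ℝ) * f (k+1)) := by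
    rw [← Finset.sum_add_distrib]
    apply Finset.sum_congr rfl
    intro k _
    rw [h2]; ring
  rw [h3]
  have h4 : (∑ k ∈ Finset.range (n+1), (-1:ℝ)^(k+1) * (n.choose (k+1) : ℝ) * f (k+1))
      = myS n f - f 0 := by
    have e1 := Finset.sum_range_succ' (fun j => (-1:ℝ)^j * (n.choose j : ℝ) * f j) (n+1)
    have e2 := Finset.sum_range_succ (fun j => (-1:ℝ)^j * (n.choose j : ℝ) * f j) (n+1)
    rw [Nat.choose_succ_self] at e2
    simp only [Nat.cast_zero, mul_zero, zero_mul, mul_one, add_zero, pow_zero, one_mul,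
      Nat.choose_zero_right, Nat.cast_one] at e1 e2
    rw [myS]
    rw [e2] at e1
    linarith [e1]
  rw [h4]
  have h5 : (∑ k ∈ Finset.range (n+1), (-1:ℝ)^(k+1) * (n.choose k : ℝ) * f (k+1))
      = - myS n (fun k => f (k+1)) := by
    rw [myS, ← Finset.sum_neg_distrib]
    apply Finset.sum_congr rfl
    intro k _
    ring
  rw [h5]
  ring




lemma myS_inv (n : ℕ) : ∀ x : ℝ, 0 < x →
    myS n (fun k => 1/(x+k)) = (n.factorial : ℝ) / myQ n x := by
  induction n with
  | zero => intro x hx; simp [myS, myQ]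
  | succ n ih =>
    intro x hx
    rw [myS_succ]
    have h1 : myS n (fun k => 1/(x+(k+1:ℕ))) = myS n (fun k => 1/((x+1)+k)) := by
      unfold myS
      apply Finset.sum_congr rfl
      intro k _
      push_cast
      ring_nf
    rw [ih x hx, h1, ih (x+1) (by linarith)]
    have hQx := myQ_pos hx n
    have hQx1 := myQ_pos (show (0:ℝ) < x+1 by linarith) n
    rw [myQ_succ']
    have hfac : ((n+1).factorial : ℝ) = (n+1) * n.factorial := by
      rw [Nat.factorial_succ]; push_cast; ring
    have key : myQ n (x+1) = myQ n x * (x + (n+1)) / x := by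
      have := myQ_succ n x
      rw [myQ_succ'] at this
      field_simp at this ⊢
      linarith [this]
    rw [key, hfac]
    field_simp
    ring



noncomputable def myF (n : ℕ) (x : ℝ) : ℝ := myS n (fun k => Real.log (x + k))

lemma myF_hasDeriv (n : ℕ) {x : ℝ} (hx : 0 < x) :
    HasDerivAt (myF n) (myS n (fun k => 1/(x+k))) x := by
  unfold myF myS
  apply HasDerivAt.fun_sum
  intro k _
  have hxk : x + (k:ℝ) ≠ 0 := by positivity
  have h : HasDerivAt (fun y : ℝ => Real.log (y + k)) (1/(x+k)) x := by
    have := ((hasDerivAt_id x).add_const (k:ℝ)).log hxk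
    simpa [one_div] using this
  simpa using h.const_mul ((-1:ℝ)^k * (n.choose k : ℝ))

lemma alt_sum_choose_zero (n : ℕ) :
    ∑ k ∈ Finset.range (n+2), (-1:ℝ)^k * ((n+1).choose k : ℝ) = 0 := by
  have := Int.alternating_sum_range_choose (n := n+1)
  simp only [Nat.add_eq_zero, and_false, if_false] at this
  have h2 : ((∑ i ∈ Finset.range (n + 2), (-1:ℤ) ^ i * ((n+1).choose i : ℤ) : ℤ) : ℝ) = 0 := by
    rw [this]; norm_num
  push_cast at h2
  convert h2 using 2

lemma myF_tendsto (n : ℕ) : Tendsto (myF (n+1)) atTop (𝓝 0) := by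
  have heq : ∀ᶠ x in atTop, myF (n+1) x
      = ∑ k ∈ Finset.range (n+2), (-1:ℝ)^k * ((n+1).choose k : ℝ) * Real.log (1 + k/x) := by
    filter_upwards [eventually_gt_atTop (0:ℝ)] with x hx
    unfold myF myS
    have h0 : ∑ k ∈ Finset.range (n+2), (-1:ℝ)^k * ((n+1).choose k : ℝ) * Real.log x = 0 := by
      rw [← Finset.sum_mul, alt_sum_choose_zero, zero_mul]
    rw [← sub_zero (∑ k ∈ Finset.range (n+2), (-1:ℝ)^k * ((n+1).choose k : ℝ) * Real.log (x + k)),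
        ← h0, ← Finset.sum_sub_distrib]
    apply Finset.sum_congr rfl
    intro k _
    have hxk : (0:ℝ) < x + k := by positivity
    rw [← mul_sub, ← Real.log_div hxk.ne' hx.ne']
    congr 2
    field_simp
  apply Tendsto.congr' (EventuallyEq.symm heq)
  have : Tendsto (fun x : ℝ => ∑ k ∈ Finset.range (n+2),
      (-1:ℝ)^k * ((n+1).choose k : ℝ) * Real.log (1 + k/x)) atTop
      (𝓝 (∑ k ∈ Finset.range (n+2), (-1:ℝ)^k * ((n+1).choose k : ℝ) * 0)) := by
    apply tendsto_finset_sum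
    intro k _
    apply Tendsto.const_mul
    have h1 : Tendsto (fun x : ℝ => 1 + (k:ℝ)/x) atTop (𝓝 1) := by
      have := Tendsto.div_atTop (tendsto_const_nhds (x := (k:ℝ))) tendsto_id
      simpa using tendsto_const_nhds.add this
    have h2 : Tendsto Real.log (𝓝 1) (𝓝 0) := by
      simpa using (Real.continuousAt_log one_ne_zero).tendsto
    exact h2.comp h1
  simpa using this



noncomputable def myD (n : ℕ) (x : ℝ) : ℝ := (n.factorial : ℝ) / myQ n x

lemma prod_range_add_two (N : ℕ) : (∏ j ∈ Finset.range N, (j + 2)) = (N+1).factorial := by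
  induction N with
  | zero => simp
  | succ N ih =>
    rw [Finset.prod_range_succ, ih,
      show (N+1+1).factorial = (N+1+1) * (N+1).factorial from Nat.factorial_succ _]
    ring

lemma myD_le {x : ℝ} (hx : 0 < x) (hx1 : x ≤ 1) (N : ℕ) :
    myD N x ≤ 1 / (x * ((N:ℝ)+1) ^ x) := by
  have key : x * ((N:ℝ)+1)^x * (N.factorial : ℝ) ≤ myQ N x := by
    have h1 : myQ N x = x * ∏ j ∈ Finset.range N, (x + (j+1)) := by
      rw [myQ, Finset.prod_range_succ']
      rw [show ((0:ℕ):ℝ) = 0 by norm_num, add_zero, mul_comm]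
      congr 1
      apply Finset.prod_congr rfl
      intro j _
      push_cast
      ring
    have h2 : (∏ j ∈ Finset.range N, ((j:ℝ)+1) ^ (1-x) * ((j:ℝ)+2) ^ x)
        ≤ ∏ j ∈ Finset.range N, (x + (j+1)) := by
      apply Finset.prod_le_prod
      · intro j _; positivity
      · intro j _
        have := Real.geom_mean_le_arith_mean2_weighted (by linarith : (0:ℝ) ≤ 1 - x)
          hx.le (by positivity : (0:ℝ) ≤ (j:ℝ)+1) (by positivity : (0:ℝ) ≤ (j:ℝ)+2)
          (by ring)
        calc ((j:ℝ)+1) ^ (1-x) * ((j:ℝ)+2) ^ x ≤ (1-x)*((j:ℝ)+1) + x*((j:ℝ)+2) := this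
          _ = x + ((j:ℝ)+1) := by ring
    have h3 : (∏ j ∈ Finset.range N, ((j:ℝ)+1) ^ (1-x) * ((j:ℝ)+2) ^ x)
        = (N.factorial : ℝ) * ((N:ℝ)+1)^x := by
      rw [Finset.prod_mul_distrib,
          Real.finset_prod_rpow _ _ (fun j _ => by positivity) (1-x),
          Real.finset_prod_rpow _ _ (fun j _ => by positivity) x]
      have e1 : (∏ j ∈ Finset.range N, ((j:ℝ)+1)) = (N.factorial : ℝ) := by
        rw_mod_cast [Finset.prod_range_add_one_eq_factorial]
      have e2 : (∏ j ∈ Finset.range N, ((j:ℝ)+2)) = ((N+1).factorial : ℝ) := by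
        rw_mod_cast [prod_range_add_two]
      rw [e1, e2]
      have e3 : ((N+1).factorial : ℝ) = (N.factorial : ℝ) * ((N:ℝ)+1) := by
        rw [Nat.factorial_succ]; push_cast; ring
      rw [e3, Real.mul_rpow (by positivity) (by positivity), ← mul_assoc,
          ← Real.rpow_add (by positivity : (0:ℝ) < (N.factorial:ℝ)), sub_add_cancel,
          Real.rpow_one]
    rw [h1]
    calc x * ((N:ℝ)+1)^x * (N.factorial : ℝ)
        = x * ((N.factorial : ℝ) * ((N:ℝ)+1)^x) := by ring
      _ ≤ x * ∏ j ∈ Finset.range N, (x + (j+1)) := by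
          apply mul_le_mul_of_nonneg_left _ hx.le
          rw [← h3]; exact h2
  rw [myD, div_le_div_iff₀ (myQ_pos hx N) (by positivity)]
  calc (N.factorial : ℝ) * (x * ((N:ℝ)+1)^x) = x * ((N:ℝ)+1)^x * (N.factorial:ℝ) := by ring
    _ ≤ myQ N x := key
    _ = 1 * myQ N x := by ring

lemma myD_anti {x y : ℝ} (hy : 0 < y) (hxy : y ≤ x) (N : ℕ) : myD N x ≤ myD N y := by
  unfold myD
  apply div_le_div_of_nonneg_left (by positivity) (myQ_pos hy N)
  apply Finset.prod_le_prod
  · intro j _; positivity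
  · intro j _; linarith

lemma myD_tendsto {x : ℝ} (hx : 0 < x) : Tendsto (fun N => myD N x) atTop (𝓝 0) := by
  set y := min x 1 with hy
  have hy0 : 0 < y := lt_min hx one_pos
  have hy1 : y ≤ 1 := min_le_right _ _
  refine squeeze_zero (g := fun N : ℕ => 1 / (y * ((N:ℝ)+1) ^ y))
    (fun N => le_of_lt (div_pos (by positivity) (myQ_pos hx N)))
    (fun N => le_trans (myD_anti hy0 (min_le_left _ _) N) (myD_le hy0 hy1 N)) ?_
  have h1 : Tendsto (fun N : ℕ => ((N:ℝ)+1) ^ y) atTop atTop :=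
    (tendsto_rpow_atTop hy0).comp
      (tendsto_atTop_add_const_right _ 1 tendsto_natCast_atTop_atTop)
  have h2 : Tendsto (fun N : ℕ => y * ((N:ℝ)+1) ^ y) atTop atTop :=
    h1.const_mul_atTop hy0
  have := h2.inv_tendsto_atTop
  simp only [Pi.inv_def] at this
  simpa [one_div] using this

lemma hasSum_inv_sq {x : ℝ} (hx : 0 < x) :
    HasSum (fun n : ℕ => (1/((n:ℝ)+1)) * (((n+1).factorial : ℝ) / myQ (n+1) x)) (1/x^2) := by
  have hterm : ∀ n : ℕ, (1/((n:ℝ)+1)) * (((n+1).factorial : ℝ) / myQ (n+1) x)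
      = (myD n x - myD (n+1) x) / x := by
    intro n
    have hQ := myQ_pos hx n
    have hQ1 := myQ_pos hx (n+1)
    rw [myQ_succ] at hQ1 ⊢
    rw [myD, myD, myQ_succ]
    have hfac : ((n+1).factorial : ℝ) = ((n:ℝ)+1) * (n.factorial : ℝ) := by
      rw [Nat.factorial_succ]; push_cast; ring
    rw [hfac]
    have hn1 : ((n:ℝ)+1) ≠ 0 := by positivity
    have hxn : x + ((n:ℝ)+1) ≠ 0 := by positivity
    field_simp
    ring
  have hnonneg : ∀ n : ℕ, 0 ≤ (1/((n:ℝ)+1)) * (((n+1).factorial : ℝ) / myQ (n+1) x) := by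
    intro n
    have := myQ_pos hx (n+1)
    positivity
  rw [hasSum_iff_tendsto_nat_of_nonneg hnonneg]
  have hpart : ∀ N : ℕ, ∑ n ∈ Finset.range N,
      (1/((n:ℝ)+1)) * (((n+1).factorial : ℝ) / myQ (n+1) x) = (myD 0 x - myD N x) / x := by
    intro N
    rw [← Finset.sum_range_sub' (fun n => myD n x) N, Finset.sum_div]
    exact Finset.sum_congr rfl (fun n _ => hterm n)
  simp only [hpart]
  have hD0 : myD 0 x = 1/x := by
    simp [myD, myQ]
  rw [hD0]
  have : Tendsto (fun N : ℕ => (1/x - myD N x) / x) atTop (𝓝 ((1/x - 0)/x)) :=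
    (tendsto_const_nhds.sub (myD_tendsto hx)).div_const x
  simpa [sub_zero, one_div, pow_two, mul_inv, div_eq_mul_inv] using this

lemma deriv_on_Ioi {u : ℝ} (hu : 0 < u) (n : ℕ) :
    ∀ x ∈ Set.Ioi u, HasDerivAt (myF (n+1)) (((n+1).factorial : ℝ) / myQ (n+1) x) x := by
  intro x hx
  have hx0 : 0 < x := lt_trans hu hx
  have := myF_hasDeriv (n+1) hx0
  rwa [myS_inv (n+1) x hx0] at this

lemma integrable_rep {u : ℝ} (hu : 0 < u) (n : ℕ) :
    IntegrableOn (fun x => ((n+1).factorial : ℝ) / myQ (n+1) x) (Set.Ioi u) := by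
  apply integrableOn_Ioi_deriv_of_nonneg
    ((myF_hasDeriv (n+1) hu).continuousAt.continuousWithinAt) (deriv_on_Ioi hu n)
    (fun x hx => le_of_lt (div_pos (by positivity) (myQ_pos (lt_trans hu hx) (n+1))))
    (myF_tendsto n)

lemma integral_rep {u : ℝ} (hu : 0 < u) (n : ℕ) :
    ∫ x in Set.Ioi u, ((n+1).factorial : ℝ) / myQ (n+1) x = - myF (n+1) u := by
  have := integral_Ioi_of_hasDerivAt_of_nonneg
    ((myF_hasDeriv (n+1) hu).continuousAt.continuousWithinAt) (deriv_on_Ioi hu n)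
    (fun x hx => le_of_lt (div_pos (by positivity) (myQ_pos (lt_trans hu hx) (n+1))))
    (myF_tendsto n)
  rw [this]; ring

lemma integral_inv_sq {u : ℝ} (hu : 0 < u) :
    IntegrableOn (fun x : ℝ => 1/x^2) (Set.Ioi u) ∧ ∫ x in Set.Ioi u, 1/x^2 = 1/u := by
  have hderiv : ∀ x ∈ Set.Ioi u, HasDerivAt (fun y : ℝ => -y⁻¹) (1/x^2) x := by
    intro x hx
    have hx0 : 0 < x := lt_trans hu hx
    have := (hasDerivAt_inv hx0.ne').neg
    simpa [one_div, Pi.neg_def] using this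
  have hcont : ContinuousWithinAt (fun y : ℝ => -y⁻¹) (Set.Ici u) u :=
    ((continuousAt_inv₀ hu.ne').neg).continuousWithinAt
  have hnonneg : ∀ x ∈ Set.Ioi u, 0 ≤ 1/x^2 := by
    intro x hx; positivity
  have htend : Tendsto (fun y : ℝ => -y⁻¹) atTop (𝓝 0) := by
    have h : Tendsto (fun y : ℝ => y⁻¹) atTop (𝓝 0) := tendsto_inv_atTop_zero
    simpa using h.neg
  refine ⟨integrableOn_Ioi_deriv_of_nonneg hcont hderiv hnonneg htend, ?_⟩
  rw [integral_Ioi_of_hasDerivAt_of_nonneg hcont hderiv hnonneg htend]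
  simp [one_div]

theorem stmt_13 (u : ℝ) (hu : 0 < u) :
    HasSum (fun n : ℕ => (1 / ((n : ℝ) + 1)) * ∑ k ∈ Finset.range (n + 2),
        (-1 : ℝ) ^ (k + 1) * ((n + 1).choose k : ℝ) * Real.log (k + u))
      (1 / u) := by
  set f : ℕ → ℝ → ℝ := fun n x => (1/((n:ℝ)+1)) * (((n+1).factorial : ℝ) / myQ (n+1) x) with hf
  set I : ℕ → ℝ := fun n => ∫ x in Set.Ioi u, f n x with hI
  -- the statement's terms equal the integrals I n
  have hstmt : ∀ n : ℕ, (1 / ((n : ℝ) + 1)) * ∑ k ∈ Finset.range (n + 2),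
      (-1 : ℝ) ^ (k + 1) * ((n + 1).choose k : ℝ) * Real.log (k + u) = I n := by
    intro n
    have h1 : ∑ k ∈ Finset.range (n + 2),
        (-1 : ℝ) ^ (k + 1) * ((n + 1).choose k : ℝ) * Real.log (k + u) = - myF (n+1) u := by
      rw [myF, myS, ← Finset.sum_neg_distrib]
      apply Finset.sum_congr rfl
      intro k _
      rw [add_comm (k:ℝ) u]
      ring
    rw [h1, hI, hf]
    simp only []
    rw [MeasureTheory.integral_const_mul, integral_rep hu n]
  -- nonnegativity
  have hfnonneg : ∀ n : ℕ, ∀ x ∈ Set.Ioi u, 0 ≤ f n x := by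
    intro n x hx
    have := myQ_pos (lt_trans hu hx) (n+1)
    rw [hf]
    positivity
  have hfint : ∀ n : ℕ, IntegrableOn (f n) (Set.Ioi u) := by
    intro n
    exact (integrable_rep hu n).const_mul _
  have hQcont : ∀ n : ℕ, Measurable fun x : ℝ => ((n+1).factorial : ℝ) / myQ (n+1) x := by
    intro n
    apply Measurable.div measurable_const
    apply Continuous.measurable
    apply continuous_finset_prod
    intro j _
    exact continuous_id.add continuous_const
  have hfmeas : ∀ n : ℕ, Measurable (f n) := fun n => (hQcont n).const_mul _
  -- lintegral computations
  have h1 : ∀ n : ℕ, ∫⁻ x in Set.Ioi u, ENNReal.ofReal (f n x) = ENNReal.ofReal (I n) := by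
    intro n
    rw [← MeasureTheory.ofReal_integral_eq_lintegral_ofReal (hfint n)]
    exact (ae_restrict_iff' measurableSet_Ioi).2 (Filter.Eventually.of_forall (hfnonneg n))
  have h2 : ∑' n, ∫⁻ x in Set.Ioi u, ENNReal.ofReal (f n x)
      = ∫⁻ x in Set.Ioi u, ∑' n, ENNReal.ofReal (f n x) :=
    (MeasureTheory.lintegral_tsum (fun n => ((hfmeas n).ennreal_ofReal).aemeasurable)).symm
  have h3 : ∫⁻ x in Set.Ioi u, ∑' n, ENNReal.ofReal (f n x)
      = ∫⁻ x in Set.Ioi u, ENNReal.ofReal (1/x^2) := by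
    apply MeasureTheory.setLIntegral_congr_fun measurableSet_Ioi
    intro x hx
    beta_reduce
    have hx0 : 0 < x := lt_trans hu hx
    have hs := hasSum_inv_sq hx0
    rw [← ENNReal.ofReal_tsum_of_nonneg (fun n => _root_.le_of_lt (by
        have := myQ_pos hx0 (n+1); positivity)) hs.summable]
    rw [hs.tsum_eq]
  have h4 : ∫⁻ x in Set.Ioi u, ENNReal.ofReal (1/x^2) = ENNReal.ofReal (1/u) := by
    rw [← MeasureTheory.ofReal_integral_eq_lintegral_ofReal (integral_inv_sq hu).1]
    · rw [(integral_inv_sq hu).2]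
    · exact (ae_restrict_iff' measurableSet_Ioi).2
        (Filter.Eventually.of_forall (fun x hx => by positivity))
  have hkey : ∑' n, ENNReal.ofReal (I n) = ENNReal.ofReal (1/u) := by
    calc ∑' n, ENNReal.ofReal (I n) = ∑' n, ∫⁻ x in Set.Ioi u, ENNReal.ofReal (f n x) := by
          exact tsum_congr (fun n => (h1 n).symm)
      _ = ENNReal.ofReal (1/u) := by rw [h2, h3, h4]
  have hInonneg : ∀ n, 0 ≤ I n := by
    intro n
    exact MeasureTheory.setIntegral_nonneg measurableSet_Ioi (hfnonneg n)
  have hsummable : Summable I := by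
    have := ENNReal.summable_toReal (by rw [hkey]; exact ENNReal.ofReal_ne_top)
    refine this.congr (fun n => ?_)
    exact ENNReal.toReal_ofReal (hInonneg n)
  have htsum : ∑' n, I n = 1/u := by
    have e := ENNReal.tsum_toReal_eq (f := fun n => ENNReal.ofReal (I n))
      (fun n => ENNReal.ofReal_ne_top)
    rw [hkey] at e
    rw [ENNReal.toReal_ofReal (le_of_lt (by positivity))] at e
    calc ∑' n, I n = ∑' n, (ENNReal.ofReal (I n)).toReal :=
          tsum_congr (fun n => (ENNReal.toReal_ofReal (hInonneg n)).symm)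
      _ = 1/u := e.symm
  have hfinal : HasSum I (1/u) := htsum ▸ hsummable.hasSum
  have : (fun n : ℕ => (1 / ((n : ℝ) + 1)) * ∑ k ∈ Finset.range (n + 2),
      (-1 : ℝ) ^ (k + 1) * ((n + 1).choose k : ℝ) * Real.log (k + u)) = I := funext hstmt
  rw [this]
  exact hfinal
end

section
/- For real u > 0 and integer d ≥ 0, ∑_{n=1}^∞ (1/(n+d)) ∑_{k=0}^n (-1)^{k+1} C(n,k) log(k+u) = ∫_0^1 x^{u-1} ( 1/(1-x)^d + (1/log x) ∑_{m=1}^d 1/(m (1-x)^{d-m}) ) dx. -/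
set_option maxHeartbeats 1000000
open MeasureTheory Real Set intervalIntegral Finset

lemma rpow_integrable (u : ℝ) (hu : 0 < u) :
    IntegrableOn (fun x : ℝ => x ^ (u-1)) (Ioo 0 1) :=
  ((intervalIntegral.intervalIntegrable_rpow' (a := 0) (b := 1) (r := u-1)
    (by linarith)).1).mono_set Ioo_subset_Ioc_self

lemma frullani (u : ℝ) (hu : 0 < u) (k : ℕ) :
    ∫ x in Ioo (0:ℝ) 1, x ^ (u-1) * (1 - x ^ k) / (-Real.log x)
      = Real.log ((k:ℝ) + u) - Real.log u := by
  have hle : u ≤ u + k := le_add_of_nonneg_right (Nat.cast_nonneg k)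
  set F : ℝ × ℝ → ℝ := fun p => Real.exp ((p.2 - 1) * Real.log p.1) with hF
  have hFmeas : Measurable F := by
    exact (((measurable_snd.sub measurable_const).mul
      (Real.measurable_log.comp measurable_fst))).exp
  set μ := volume.restrict (Ioo (0:ℝ) 1) with hμ
  set ν := volume.restrict (Ioc u (u + k)) with hν
  -- a.e. membership in the product
  have hprod : μ.prod ν = (volume.prod volume).restrict ((Ioo (0:ℝ) 1) ×ˢ (Ioc u (u+k))) := by
    rw [hμ, hν, Measure.prod_restrict]
  have hae : ∀ᵐ p : ℝ × ℝ ∂(μ.prod ν), p ∈ (Ioo (0:ℝ) 1) ×ˢ (Ioc u (u+k)) := by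
    rw [hprod]
    exact ae_restrict_mem (measurableSet_Ioo.prod measurableSet_Ioc)
  -- integrability on the product
  have hdom : Integrable (fun p : ℝ × ℝ => p.1 ^ (u-1) * 1) (μ.prod ν) := by
    apply Integrable.mul_prod (rpow_integrable u hu) (integrable_const 1)
  have hFint : Integrable F (μ.prod ν) := by
    apply Integrable.mono' hdom hFmeas.aestronglyMeasurable
    filter_upwards [hae] with p hp
    obtain ⟨⟨hx0, hx1⟩, ht⟩ := hp
    rw [Real.norm_of_nonneg (Real.exp_nonneg _), mul_one]
    have : Real.exp ((p.2 - 1) * Real.log p.1) = p.1 ^ (p.2 - 1) := by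
      rw [Real.rpow_def_of_pos hx0, mul_comm]
    rw [this]
    exact Real.rpow_le_rpow_of_exponent_ge hx0 hx1.le (by linarith [ht.1])
  have hswap : (∫ x, (∫ t, F (x, t) ∂ν) ∂μ) = ∫ t, (∫ x, F (x, t) ∂μ) ∂ν :=
    integral_integral_swap hFint
  -- left side computation
  have hleft : (∫ x, (∫ t, F (x, t) ∂ν) ∂μ)
      = ∫ x in Ioo (0:ℝ) 1, x ^ (u-1) * (1 - x ^ k) / (-Real.log x) := by
    rw [hμ]
    apply setIntegral_congr_fun measurableSet_Ioo
    intro x hx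
    obtain ⟨hx0, hx1⟩ := hx
    dsimp only
    have hlogx : Real.log x < 0 := Real.log_neg hx0 hx1
    have hlog0 : Real.log x ≠ 0 := ne_of_lt hlogx
    rw [hν, ← intervalIntegral.integral_of_le hle]
    have hderiv : ∀ t ∈ Set.uIcc u (u+k), HasDerivAt
        (fun t => Real.exp ((t - 1) * Real.log x) / Real.log x)
        (F (x, t)) t := by
      intro t _
      have h1 : HasDerivAt (fun t : ℝ => (t - 1) * Real.log x) (Real.log x) t := by
        simpa using ((hasDerivAt_id t).sub_const 1).mul_const (Real.log x)
      have h2 := (Real.hasDerivAt_exp ((t - 1) * Real.log x)).comp t h1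
      have h3 := h2.div_const (Real.log x)
      rw [show F (x, t) = Real.exp ((t - 1) * Real.log x) * Real.log x / Real.log x by
        rw [mul_div_assoc, div_self hlog0, mul_one]]
      exact h3
    have hcont : IntervalIntegrable (fun t => F (x, t)) volume u (u+k) := by
      have hc : Continuous fun t : ℝ => Real.exp ((t - 1) * Real.log x) :=
        Real.continuous_exp.comp ((continuous_id.sub continuous_const).mul continuous_const)
      exact hc.intervalIntegrable u (u+k)
    rw [intervalIntegral.integral_eq_sub_of_hasDerivAt hderiv hcont]
    have e1 : Real.exp ((u + k - 1) * Real.log x) = x ^ (u + (k:ℝ) - 1) := by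
      rw [Real.rpow_def_of_pos hx0, mul_comm]
    have e2 : Real.exp ((u - 1) * Real.log x) = x ^ (u - 1) := by
      rw [Real.rpow_def_of_pos hx0, mul_comm]
    rw [e1, e2]
    have e3 : x ^ (u + (k:ℝ) - 1) = x ^ (u-1) * x ^ k := by
      rw [← Real.rpow_natCast x k, ← Real.rpow_add hx0]
      ring_nf
    rw [e3, div_neg, ← neg_div, div_sub_div_same]
    congr 1
    ring
  -- right side computation
  have hright : (∫ t, (∫ x, F (x, t) ∂μ) ∂ν) = Real.log ((k:ℝ) + u) - Real.log u := by
    rw [hν]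
    have : ∀ t ∈ Ioc u (u+k), (∫ x, F (x, t) ∂μ) = 1/t := by
      intro t ht
      have ht0 : 0 < t := hu.trans ht.1
      rw [hμ]
      have : ∫ x in Ioo (0:ℝ) 1, F (x, t) = ∫ x in Ioo (0:ℝ) 1, x ^ (t-1) := by
        apply setIntegral_congr_fun measurableSet_Ioo
        intro x hx
        rw [hF]
        simp only
        rw [Real.rpow_def_of_pos hx.1, mul_comm]
      rw [this, ← integral_Ioc_eq_integral_Ioo, ← intervalIntegral.integral_of_le zero_le_one]
      rw [integral_rpow (Or.inl (by linarith))]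
      rw [Real.one_rpow, Real.zero_rpow (by linarith)]
      ring_nf
    rw [setIntegral_congr_fun measurableSet_Ioc this]
    rw [← intervalIntegral.integral_of_le hle]
    rw [integral_one_div (by
      intro h; rw [Set.mem_uIcc] at h
      rcases h with ⟨h1,h2⟩|⟨h1,h2⟩ <;> nlinarith [Nat.cast_nonneg (α := ℝ) k])]
    rw [Real.log_div (by positivity) (by positivity)]
    ring_nf
  rw [← hleft, hswap, hright]

lemma gk_meas (u : ℝ) (k : ℕ) :
    AEStronglyMeasurable (fun x : ℝ => x ^ (u-1) * (1 - x ^ k) / (-Real.log x))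
      (volume.restrict (Ioo (0:ℝ) 1)) := by
  have h1 : Measurable fun x : ℝ => x ^ (u-1) := by fun_prop
  have h2 : Measurable fun x : ℝ => (1 - x ^ k) := by fun_prop
  have h3 : Measurable fun x : ℝ => (-Real.log x)⁻¹ := Real.measurable_log.neg.inv
  exact (((h1.mul h2).mul h3)).aestronglyMeasurable.congr (by
    filter_upwards with x using by rw [div_eq_mul_inv]; rfl)
    |>.congr (Filter.EventuallyEq.refl _ _)

lemma one_sub_le_neg_log {x : ℝ} (hx0 : 0 < x) : 1 - x ≤ -Real.log x := by
  have := Real.log_le_sub_one_of_pos hx0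
  linarith

lemma gk_integrable (u : ℝ) (hu : 0 < u) (k : ℕ) :
    IntegrableOn (fun x : ℝ => x ^ (u-1) * (1 - x ^ k) / (-Real.log x)) (Ioo (0:ℝ) 1) := by
  apply Integrable.mono' ((rpow_integrable u hu).const_mul (k : ℝ)) (gk_meas u k)
  rw [ae_restrict_iff' measurableSet_Ioo]
  filter_upwards with x hx
  obtain ⟨hx0, hx1⟩ := hx
  have hlogx : Real.log x < 0 := Real.log_neg hx0 hx1
  have hxk1 : x ^ k ≤ 1 := pow_le_one₀ hx0.le hx1.le
  have hbound : 1 - x ^ k ≤ (k : ℝ) * (-Real.log x) := by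
    have h1 : 1 - x ^ k ≤ -Real.log (x ^ k) := one_sub_le_neg_log (pow_pos hx0 k)
    rw [Real.log_pow] at h1
    push_cast at h1
    linarith [h1]
  have hnn : 0 ≤ x ^ (u-1) * (1 - x ^ k) / (-Real.log x) := by
    apply div_nonneg (mul_nonneg (Real.rpow_nonneg hx0.le _) (by linarith)) (by linarith)
  rw [Real.norm_of_nonneg hnn]
  rw [div_le_iff₀ (by linarith : (0:ℝ) < -Real.log x)]
  calc x ^ (u-1) * (1 - x ^ k) ≤ x ^ (u-1) * ((k:ℝ) * (-Real.log x)) := by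
        apply mul_le_mul_of_nonneg_left hbound (Real.rpow_nonneg hx0.le _)
    _ = (k:ℝ) * x ^ (u-1) * (-Real.log x) := by ring

lemma sum_log_eq (u : ℝ) (hu : 0 < u) (N : ℕ) (hN : N ≠ 0) :
    ∑ k ∈ range (N+1), (-1:ℝ)^(k+1) * (N.choose k : ℝ) * Real.log ((k:ℝ) + u)
      = ∫ x in Ioo (0:ℝ) 1, x ^ (u-1) * (1-x)^N / (-Real.log x) := by
  have halt : ∑ k ∈ range (N+1), (-1:ℝ)^(k+1) * (N.choose k : ℝ) = 0 := by
    have := Int.alternating_sum_range_choose_of_ne hN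
    have h2 : ((∑ i ∈ range (N + 1), (-1:ℤ) ^ i * ↑(N.choose i) : ℤ) : ℝ) = 0 := by
      rw [this]; norm_num
    push_cast at h2
    calc ∑ k ∈ range (N+1), (-1:ℝ)^(k+1) * (N.choose k : ℝ)
        = -∑ k ∈ range (N+1), (-1:ℝ)^k * (N.choose k : ℝ) := by
          rw [← Finset.sum_neg_distrib]
          apply Finset.sum_congr rfl
          intro k _; ring
      _ = 0 := by rw [h2]; ring
  -- rewrite each log as log(k+u) - log u
  have step1 : ∑ k ∈ range (N+1), (-1:ℝ)^(k+1) * (N.choose k : ℝ) * Real.log ((k:ℝ) + u)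
      = ∑ k ∈ range (N+1), (-1:ℝ)^(k+1) * (N.choose k : ℝ) * (Real.log ((k:ℝ) + u) - Real.log u) := by
    rw [Finset.sum_congr rfl (fun k _ => by ring :
      ∀ k ∈ range (N+1), (-1:ℝ)^(k+1) * (N.choose k : ℝ) * (Real.log ((k:ℝ) + u) - Real.log u)
        = (-1:ℝ)^(k+1) * (N.choose k : ℝ) * Real.log ((k:ℝ) + u)
          - (-1:ℝ)^(k+1) * (N.choose k : ℝ) * Real.log u)]
    rw [Finset.sum_sub_distrib, ← Finset.sum_mul, halt]
    ring
  rw [step1]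
  have step2 : ∀ k ∈ range (N+1), (-1:ℝ)^(k+1) * (N.choose k : ℝ) * (Real.log ((k:ℝ) + u) - Real.log u)
      = ∫ x in Ioo (0:ℝ) 1, (-1:ℝ)^(k+1) * (N.choose k : ℝ) * (x ^ (u-1) * (1 - x ^ k) / (-Real.log x)) := by
    intro k _
    rw [MeasureTheory.integral_const_mul, frullani u hu k]
  rw [Finset.sum_congr rfl step2]
  rw [← integral_finset_sum _ (fun k _ => ((gk_integrable u hu k).const_mul _))]
  apply setIntegral_congr_fun measurableSet_Ioo
  intro x hx
  obtain ⟨hx0, hx1⟩ := hx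
  have hlogx : Real.log x < 0 := Real.log_neg hx0 hx1
  -- pointwise binomial identity
  have hbin : ∑ k ∈ range (N+1), (-1:ℝ)^k * (N.choose k : ℝ) * x^k = (1-x)^N := by
    have := add_pow (-x) 1 N
    simp only [one_pow, mul_one] at this
    rw [show (1:ℝ) - x = -x + 1 by ring, this]
    apply Finset.sum_congr rfl
    intro k _
    rw [neg_pow]
    ring
  calc ∑ k ∈ range (N+1), (-1:ℝ)^(k+1) * (N.choose k : ℝ) * (x ^ (u-1) * (1 - x^k) / (-Real.log x))
      = (x ^ (u-1) / (-Real.log x)) * ∑ k ∈ range (N+1), ((-1:ℝ)^(k+1) * (N.choose k : ℝ)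
          - (-1:ℝ)^(k+1) * (N.choose k : ℝ) * x^k) := by
        rw [Finset.mul_sum]
        apply Finset.sum_congr rfl
        intro k _
        ring
    _ = (x ^ (u-1) / (-Real.log x)) * (1-x)^N := by
        rw [Finset.sum_sub_distrib, halt]
        congr 1
        rw [← hbin, zero_sub, ← Finset.sum_neg_distrib]
        apply Finset.sum_congr rfl
        intro k _
        ring
    _ = x ^ (u-1) * (1-x)^N / (-Real.log x) := by ring

lemma pointwise_hasSum (u : ℝ) (d : ℕ) {x : ℝ} (hx0 : 0 < x) (hx1 : x < 1) :
    HasSum (fun n : ℕ => (1 / ((n:ℝ) + 1 + d)) * (x ^ (u-1) * (1-x)^(n+1) / (-Real.log x)))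
      (x ^ (u - 1) * (1 / (1 - x) ^ d +
        (1 / Real.log x) * ∑ m ∈ Finset.Icc 1 d, 1 / ((m : ℝ) * (1 - x) ^ (d - m)))) := by
  set t : ℝ := 1 - x with ht
  have ht0 : 0 < t := by simp only [ht]; linarith
  have ht1 : t < 1 := by simp only [ht]; linarith
  have hlogx : Real.log x < 0 := Real.log_neg hx0 hx1
  have hlogne : Real.log x ≠ 0 := ne_of_lt hlogx
  have htne : t ≠ 0 := ne_of_gt ht0
  have H1 : HasSum (fun n : ℕ => t ^ (n+1) / ((n:ℝ)+1)) (-Real.log (1 - t)) := by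
    have h := Real.hasSum_pow_div_log_of_abs_lt_one (x := t) (by rw [abs_of_pos ht0]; exact ht1)
    convert h using 1
  have hx_eq : (1:ℝ) - t = x := by rw [ht]; ring
  rw [hx_eq] at H1
  have H2 : HasSum (fun n : ℕ => t ^ (n+d+1) / ((n:ℝ)+d+1))
      ((-Real.log x) - ∑ i ∈ range d, t ^ (i+1) / ((i:ℝ)+1)) := by
    have h := (hasSum_nat_add_iff (f := fun n : ℕ => t ^ (n+1) / ((n:ℝ)+1)) d).2
      (by rwa [sub_add_cancel])
    convert h using 1
    case e'_3 => exact rfl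
    funext n
    have : n + d + 1 = n + 1 + d := by omega
    rw [this]
    push_cast
    ring_nf
  set c : ℝ := x ^ (u-1) / ((-Real.log x) * t ^ d) with hc
  have H3 := H2.mul_left c
  convert H3 using 1
  case e'_3 => exact rfl
  · funext n
    have htd : t ^ d ≠ 0 := pow_ne_zero d htne
    have h1 : t ^ (n+d+1) = t ^ (n+1) * t ^ d := by rw [← pow_add]; ring_nf
    have hne2 : ((n:ℝ) + d + 1) ≠ 0 := by positivity
    have hne3 : ((n:ℝ) + 1 + d) ≠ 0 := by positivity
    rw [hc, h1]
    field_simp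
    ring
  · have htd : t ^ d ≠ 0 := pow_ne_zero d htne
    have hsum_eq : ∑ i ∈ range d, t ^ (i+1) / ((i:ℝ)+1) / t ^ d
        = ∑ m ∈ Finset.Icc 1 d, 1 / ((m : ℝ) * t ^ (d - m)) := by
      rw [← Finset.Ico_add_one_right_eq_Icc, Finset.sum_Ico_eq_sum_range]
      apply Finset.sum_congr rfl
      intro i hi
      rw [Finset.mem_range] at hi
      have hpow : t ^ (i+1) * t ^ (d - (1+i)) = t ^ d := by
        rw [← pow_add]; congr 1; omega
      have hz : t ^ (d - (1+i)) ≠ 0 := pow_ne_zero _ htne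
      push_cast
      rw [div_div, one_div, eq_comm, inv_eq_one_div, div_eq_div_iff (by positivity) (by
        have h1 : (0:ℝ) < (1 + (i:ℝ)) := by positivity
        have h2 : (0:ℝ) < t ^ (d - (1+i)) := pow_pos ht0 _
        positivity)]
      rw [one_mul]
      calc ((i:ℝ) + 1) * t ^ d
          = (1 + (i:ℝ)) * (t ^ (i+1) * t ^ (d - (1+i))) := by rw [hpow]; ring
        _ = t ^ (i+1) * ((1 + (i:ℝ)) * t ^ (d - (1+i))) := by ring
    have hS : (∑ i ∈ range d, t ^ (i+1) / ((i:ℝ)+1)) / t ^ d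
        = ∑ m ∈ Finset.Icc 1 d, 1 / ((m : ℝ) * t ^ (d - m)) := by
      rw [Finset.sum_div]; exact hsum_eq
    have key : c * ((-Real.log x) - ∑ i ∈ range d, t ^ (i+1) / ((i:ℝ)+1))
        = x ^ (u-1) * (1 / t ^ d) + x ^ (u-1) * ((1 / Real.log x) *
            ∑ m ∈ Finset.Icc 1 d, 1 / ((m : ℝ) * t ^ (d - m))) := by
      rw [mul_sub]
      rw [show c * (-Real.log x) = x ^ (u-1) * (1 / t ^ d) by
        rw [hc]; field_simp]
      rw [show c * (∑ i ∈ range d, t ^ (i+1) / ((i:ℝ)+1))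
          = -(x ^ (u-1) * ((1 / Real.log x) *
              ∑ m ∈ Finset.Icc 1 d, 1 / ((m : ℝ) * t ^ (d - m)))) by
        rw [hc, ← hS]
        field_simp]
      ring
    rw [key, mul_add]

theorem stmt_18 (u : ℝ) (hu : 0 < u) (d : ℕ) :
    HasSum (fun n : ℕ => (1 / ((n : ℝ) + 1 + d)) * ∑ k ∈ Finset.range (n + 2),
        (-1 : ℝ) ^ (k + 1) * ((n + 1).choose k : ℝ) * Real.log (k + u))
      (∫ x in (0 : ℝ)..1, x ^ (u - 1) * (1 / (1 - x) ^ d +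
        (1 / Real.log x) * ∑ m ∈ Finset.Icc 1 d, 1 / ((m : ℝ) * (1 - x) ^ (d - m)))) := by
  set μ := volume.restrict (Ioo (0:ℝ) 1) with hμ
  set F : ℕ → ℝ → ℝ := fun n x => (1/((n:ℝ)+1+d)) * (x ^ (u-1) * (1-x)^(n+1) / (-Real.log x))
    with hF
  set h : ℝ → ℝ := fun x => x ^ (u - 1) * (1 / (1 - x) ^ d +
        (1 / Real.log x) * ∑ m ∈ Finset.Icc 1 d, 1 / ((m : ℝ) * (1 - x) ^ (d - m))) with hh
  have hps : ∀ x ∈ Ioo (0:ℝ) 1, HasSum (fun n => F n x) (h x) := fun x hx =>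
    pointwise_hasSum u d hx.1 hx.2
  -- basic bounds on F
  have hbounds : ∀ n : ℕ, ∀ x ∈ Ioo (0:ℝ) 1, 0 ≤ F n x ∧ F n x ≤ x ^ (u-1) := by
    intro n x hx
    obtain ⟨hx0, hx1⟩ := hx
    have hlogx : Real.log x < 0 := Real.log_neg hx0 hx1
    have h1x : (0:ℝ) ≤ 1 - x := by linarith
    have hcpos : (0:ℝ) < (n:ℝ)+1+d := by positivity
    have hrnn : (0:ℝ) ≤ x ^ (u-1) := Real.rpow_nonneg hx0.le _
    constructor
    · apply mul_nonneg (by positivity)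
      apply div_nonneg (mul_nonneg hrnn (by positivity)) (by linarith)
    · have hp1 : (1-x)^(n+1) ≤ -Real.log x := by
        calc (1-x)^(n+1) ≤ (1-x)^1 :=
              pow_le_pow_of_le_one h1x (by linarith) (by omega)
          _ = 1 - x := pow_one _
          _ ≤ -Real.log x := one_sub_le_neg_log hx0
      have hq : x ^ (u-1) * (1-x)^(n+1) / (-Real.log x) ≤ x ^ (u-1) := by
        rw [div_le_iff₀ (by linarith)]
        calc x ^ (u-1) * (1-x)^(n+1) ≤ x ^ (u-1) * (-Real.log x) :=
              mul_le_mul_of_nonneg_left hp1 hrnn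
          _ = x ^ (u-1) * -Real.log x := rfl
      calc F n x ≤ 1 * (x ^ (u-1) * (1-x)^(n+1) / (-Real.log x)) := by
            apply mul_le_mul_of_nonneg_right _ (by
              apply div_nonneg (mul_nonneg hrnn (by positivity)) (by linarith))
            rw [div_le_one hcpos]
            linarith [Nat.cast_nonneg (α := ℝ) n, Nat.cast_nonneg (α := ℝ) d]
        _ = x ^ (u-1) * (1-x)^(n+1) / (-Real.log x) := one_mul _
        _ ≤ x ^ (u-1) := hq
  -- measurability
  have hmeas : ∀ n : ℕ, AEStronglyMeasurable (F n) μ := by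
    intro n
    have h1 : Measurable fun x : ℝ => x ^ (u-1) := by fun_prop
    have h2 : Measurable fun x : ℝ => (1-x)^(n+1) := by fun_prop
    have h3 : Measurable fun x : ℝ => (-Real.log x) := Real.measurable_log.neg
    exact (((h1.mul h2).div h3).const_mul _).aestronglyMeasurable
  -- integrability
  have hFint : ∀ n : ℕ, Integrable (F n) μ := by
    intro n
    apply Integrable.mono' (rpow_integrable u hu) (hmeas n)
    filter_upwards [ae_restrict_mem measurableSet_Ioo] with x hx
    rw [Real.norm_of_nonneg (hbounds n x hx).1]
    exact (hbounds n x hx).2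
  -- nonneg integrals
  have hphinn : ∀ n : ℕ, 0 ≤ ∫ x, F n x ∂μ := by
    intro n
    apply MeasureTheory.integral_nonneg_of_ae
    filter_upwards [ae_restrict_mem measurableSet_Ioo] with x hx
    exact (hbounds n x hx).1
  -- h is dominated by x^(u-1) on Ioo
  have hhle : ∀ x ∈ Ioo (0:ℝ) 1, 0 ≤ h x ∧ h x ≤ x ^ (u-1) := by
    intro x hx
    constructor
    · exact hasSum_le (fun n => (hbounds n x hx).1) hasSum_zero (hps x hx)
    · obtain ⟨hx0, hx1⟩ := hx
      have hlogx : Real.log x < 0 := Real.log_neg hx0 hx1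
      have hG : HasSum (fun n : ℕ => (x ^ (u-1) / (-Real.log x)) * ((1-x) ^ (n+1) / ((n:ℝ)+1)))
          (x ^ (u-1)) := by
        have habs : |1 - x| < 1 := by rw [abs_of_pos (by linarith)]; linarith
        have h0 := (Real.hasSum_pow_div_log_of_abs_lt_one habs).mul_left
          (x ^ (u-1) / (-Real.log x))
        have e : (1:ℝ) - (1-x) = x := by ring
        rw [e] at h0
        have e2 : x ^ (u-1) / (-Real.log x) * (-Real.log x) = x ^ (u-1) := by
          rw [div_mul_cancel₀]
          exact neg_ne_zero.2 (ne_of_lt hlogx)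
        rw [e2] at h0
        exact h0
      apply hasSum_le _ (hps x ⟨hx0, hx1⟩) hG
      intro n
      rw [hF]
      have hrnn : (0:ℝ) ≤ x ^ (u-1) := Real.rpow_nonneg hx0.le _
      have h1x : (0:ℝ) ≤ 1 - x := by linarith
      have hnum : (0:ℝ) ≤ x ^ (u-1) * (1-x)^(n+1) := mul_nonneg hrnn (by positivity)
      calc (1/((n:ℝ)+1+d)) * (x ^ (u-1) * (1-x)^(n+1) / (-Real.log x))
          ≤ (1/((n:ℝ)+1)) * (x ^ (u-1) * (1-x)^(n+1) / (-Real.log x)) := by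
            apply mul_le_mul_of_nonneg_right _ (div_nonneg hnum (by linarith))
            apply one_div_le_one_div_of_le (by positivity)
            simp [Nat.cast_nonneg]
        _ = (x ^ (u-1) / (-Real.log x)) * ((1-x) ^ (n+1) / ((n:ℝ)+1)) := by ring
  -- summability via lintegral
  have hofReal : ∀ n : ℕ, ENNReal.ofReal (∫ x, F n x ∂μ) = ∫⁻ x, ENNReal.ofReal (F n x) ∂μ := by
    intro n
    apply ofReal_integral_eq_lintegral_ofReal (hFint n)
    filter_upwards [ae_restrict_mem measurableSet_Ioo] with x hx
    exact (hbounds n x hx).1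
  have hlt : ∑' n : ℕ, ENNReal.ofReal (∫ x, F n x ∂μ) ≠ ⊤ := by
    have e1 : ∑' n : ℕ, ENNReal.ofReal (∫ x, F n x ∂μ)
        = ∫⁻ x, ∑' n : ℕ, ENNReal.ofReal (F n x) ∂μ := by
      rw [tsum_congr hofReal, ← lintegral_tsum (fun n => ((hmeas n).aemeasurable.ennreal_ofReal))]
    rw [e1]
    have e2 : ∫⁻ x, ∑' n : ℕ, ENNReal.ofReal (F n x) ∂μ
        ≤ ∫⁻ x, ENNReal.ofReal (x ^ (u-1)) ∂μ := by
      apply lintegral_mono_ae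
      filter_upwards [ae_restrict_mem measurableSet_Ioo] with x hx
      rw [← ENNReal.ofReal_tsum_of_nonneg (fun n => (hbounds n x hx).1) (hps x hx).summable,
        (hps x hx).tsum_eq]
      exact ENNReal.ofReal_le_ofReal (hhle x hx).2
    have e3 : ∫⁻ x, ENNReal.ofReal (x ^ (u-1)) ∂μ ≠ ⊤ := by
      have hfin := (rpow_integrable u hu).2
      rw [hasFiniteIntegral_iff_norm] at hfin
      apply ne_top_of_le_ne_top hfin.ne
      apply lintegral_mono
      intro x
      exact ENNReal.ofReal_le_ofReal (le_abs_self _)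
    exact ne_top_of_le_ne_top e3 e2
  -- summability of the real integrals
  have hsummable : Summable (fun n : ℕ => ∫ x, F n x ∂μ) := by
    have := ENNReal.summable_toReal hlt
    apply this.congr
    intro n
    rw [ENNReal.toReal_ofReal (hphinn n)]
  have hnorm : Summable (fun n : ℕ => ∫ x, ‖F n x‖ ∂μ) := by
    apply hsummable.congr
    intro n
    apply MeasureTheory.integral_congr_ae
    filter_upwards [ae_restrict_mem measurableSet_Ioo] with x hx
    rw [Real.norm_of_nonneg (hbounds n x hx).1]
  have H := hasSum_integral_of_summable_integral_norm hFint hnorm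
  -- identify the terms
  have hfun : ∀ n : ℕ, (∫ x, F n x ∂μ) = (1 / ((n : ℝ) + 1 + d)) * ∑ k ∈ Finset.range (n + 2),
      (-1 : ℝ) ^ (k + 1) * ((n + 1).choose k : ℝ) * Real.log (k + u) := by
    intro n
    rw [hF]
    simp only
    rw [MeasureTheory.integral_const_mul]
    congr 1
    rw [sum_log_eq u hu (n+1) (Nat.succ_ne_zero n)]
  -- identify the value
  have hval : (∫ x, (∑' n, F n x) ∂μ) = ∫ x in (0:ℝ)..1, h x := by
    rw [intervalIntegral.integral_of_le zero_le_one, integral_Ioc_eq_integral_Ioo]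
    apply setIntegral_congr_fun measurableSet_Ioo
    intro x hx
    exact (hps x hx).tsum_eq
  rw [← hval]
  have hfe : (fun n : ℕ => (1 / ((n : ℝ) + 1 + d)) * ∑ k ∈ Finset.range (n + 2),
      (-1 : ℝ) ^ (k + 1) * ((n + 1).choose k : ℝ) * Real.log (k + u))
      = fun n => ∫ x, F n x ∂μ := funext fun n => (hfun n).symm
  rw [hfe]
  exact H
end
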